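/- arXiv:1904.08882 — 4 statements merged into one kernel-verified Lean document; each statement's English description precedes it below -/
import Mathlib

section
/- Let p be a prime, H > 0, and let X = (X_n)_{n∈ℕ₀} be a dt-ss-si process with scaling function b(n) = (|n|_p)^H. Then for all m, n ∈ ℕ₀ with m ≠ n, P(X_m = X_n) = P(X_m = X_n = 0) = P(X_i = 0 for all i ∈ ℕ₀). -/
open MeasureTheory ProbabilityTheory Filter

noncomputable section

/-- The `p`-adic norm of a natural number, as a real number (`0` for `n = 0`). -/
def padicNormNat (p n : ℕ) : ℝ := ((padicNorm p (n : ℚ) : ℚ) : ℝ)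

/-- Equality in distribution of two families of random variables: the laws of the
induced maps into the product space coincide. -/
def EqDistFam {ι Ω₁ Ω₂ E : Type*} [MeasurableSpace Ω₁] [MeasurableSpace Ω₂]
    [MeasurableSpace E]
    (P₁ : Measure Ω₁) (P₂ : Measure Ω₂) (X : ι → Ω₁ → E) (Y : ι → Ω₂ → E) : Prop :=
  Measure.map (fun ω i => X i ω) P₁ = Measure.map (fun ω i => Y i ω) P₂

/-- A discrete-time process is self-similar with scaling function `b` if for every `n ≥ 1`,
`(X (n*m))ₘ ≐ (b n • X m)ₘ`. -/
def SelfSimilar {Ω : Type*} [MeasurableSpace Ω] (P : Measure Ω) (X : ℕ → Ω → ℝ)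
    (b : ℕ → ℝ) : Prop :=
  ∀ n : ℕ, 1 ≤ n → EqDistFam P P (fun m ω => X (n * m) ω) (fun m ω => b n * X m ω)

/-- A discrete-time process has stationary increments if for every `k ≥ 1`,
`(X (m+1) - X m)ₘ ≐ (X (m+k+1) - X (m+k))ₘ`. -/
def StationaryIncrements {Ω : Type*} [MeasurableSpace Ω] (P : Measure Ω)
    (X : ℕ → Ω → ℝ) : Prop :=
  ∀ k : ℕ, 1 ≤ k → EqDistFam P P (fun m ω => X (m + 1) ω - X m ω)
    (fun m ω => X (m + k + 1) ω - X (m + k) ω)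

open Topology ENNReal NNReal

section aux

lemma bf_pos {p : ℕ} (hp : p.Prime) (H : ℝ) {n : ℕ} (hn : n ≠ 0) :
    0 < (padicNormNat p n) ^ H := by
  haveI : Fact p.Prime := ⟨hp⟩
  have h1 : (0:ℚ) < padicNorm p (n:ℚ) :=
    lt_of_le_of_ne (padicNorm.nonneg _)
      (Ne.symm (padicNorm.nonzero (by exact_mod_cast hn)))
  have h2 : (0:ℝ) < padicNormNat p n := by
    unfold padicNormNat; exact_mod_cast h1
  exact Real.rpow_pos_of_pos h2 H

lemma bf_ne_zero {p : ℕ} (hp : p.Prime) (H : ℝ) {n : ℕ} (hn : n ≠ 0) :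
    (padicNormNat p n) ^ H ≠ 0 := (bf_pos hp H hn).ne'

lemma padicNorm_pow_self {p : ℕ} (hp : p.Prime) (k : ℕ) :
    padicNorm p ((p:ℚ) ^ k) = ((p:ℚ)⁻¹) ^ k := by
  haveI : Fact p.Prime := ⟨hp⟩
  induction k with
  | zero => simp
  | succ n ih =>
      rw [pow_succ, padicNorm.mul, ih, padicNorm.padicNorm_p hp.one_lt, pow_succ]

lemma bf_le_geom {p : ℕ} (hp : p.Prime) {H : ℝ} (hH : 0 < H) {c : ℕ} (hc : c ≠ 0) (k : ℕ) :
    (padicNormNat p (c * p ^ k)) ^ H ≤ (((p:ℝ)⁻¹) ^ H) ^ k := by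
  haveI : Fact p.Prime := ⟨hp⟩
  have hp1 : 1 < p := hp.one_lt
  have hple : (0:ℚ) < (p:ℚ)⁻¹ := by
    rw [inv_pos]; exact_mod_cast hp.pos
  have hnorm : padicNorm p ((c * p ^ k : ℕ) : ℚ) = padicNorm p (c:ℚ) * ((p:ℚ)⁻¹) ^ k := by
    push_cast
    rw [padicNorm.mul, padicNorm_pow_self hp]
  have hc1 : padicNorm p (c:ℚ) ≤ 1 := by
    have := padicNorm.of_int (p := p) (c : ℤ)
    simpa using this
  have hnormle : padicNorm p ((c * p ^ k : ℕ) : ℚ) ≤ ((p:ℚ)⁻¹) ^ k := by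
    rw [hnorm]
    calc padicNorm p (c:ℚ) * ((p:ℚ)⁻¹) ^ k ≤ 1 * ((p:ℚ)⁻¹) ^ k := by
          apply mul_le_mul_of_nonneg_right hc1 (le_of_lt (pow_pos hple k))
      _ = ((p:ℚ)⁻¹) ^ k := one_mul _
  have hreal : padicNormNat p (c * p ^ k) ≤ ((p:ℝ)⁻¹) ^ k := by
    unfold padicNormNat
    have : (((((p:ℚ)⁻¹) ^ k : ℚ)) : ℝ) = ((p:ℝ)⁻¹) ^ k := by push_cast; ring
    rw [← this]
    exact_mod_cast hnormle
  have h0 : 0 ≤ padicNormNat p (c * p ^ k) := by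
    unfold padicNormNat
    exact_mod_cast padicNorm.nonneg _
  calc (padicNormNat p (c * p ^ k)) ^ H ≤ (((p:ℝ)⁻¹) ^ k) ^ H :=
        Real.rpow_le_rpow h0 hreal hH.le
    _ = (((p:ℝ)⁻¹) ^ H) ^ k := by
        rw [← Real.rpow_natCast ((p:ℝ)⁻¹) k, ← Real.rpow_mul (by positivity),
          mul_comm, Real.rpow_mul (by positivity), Real.rpow_natCast]

lemma bf_nonneg (p : ℕ) (H : ℝ) (n : ℕ) : 0 ≤ (padicNormNat p n) ^ H := by
  apply Real.rpow_nonneg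
  unfold padicNormNat
  exact_mod_cast padicNorm.nonneg _

lemma bf_small_general {p : ℕ} (hp : p.Prime) {H : ℝ} (hH : 0 < H)
    {g : ℕ → ℕ} {e : ℕ → ℕ} (hg : ∀ k, ∃ c, c ≠ 0 ∧ g k = c * p ^ e k)
    (he : Tendsto e atTop atTop) :
    Tendsto (fun k => (padicNormNat p (g k)) ^ H) atTop (𝓝 0) := by
  have hgeom : Tendsto (fun k => (((p:ℝ)⁻¹) ^ H) ^ e k) atTop (𝓝 0) := by
    apply (_root_.tendsto_pow_atTop_nhds_zero_of_lt_one ?h0 ?h1).comp he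
    case h0 =>
      apply Real.rpow_nonneg
      positivity
    case h1 =>
      apply Real.rpow_lt_one (by positivity) ?_ hH
      rw [inv_lt_one_iff₀]
      right
      exact_mod_cast hp.one_lt
  apply squeeze_zero (fun k => bf_nonneg p H (g k)) ?_ hgeom
  intro k
  obtain ⟨c, hc, hck⟩ := hg k
  rw [hck]
  exact bf_le_geom hp hH hc (e k)

end aux


section prob

variable {Ω : Type*} [MeasurableSpace Ω] (P : Measure Ω) [IsProbabilityMeasure P]
  (X : ℕ → Ω → ℝ)

lemma eqdist_apply {F G : ℕ → Ω → ℝ} (hF : ∀ i, Measurable (F i))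
    (hG : ∀ i, Measurable (G i)) (h : EqDistFam P P F G)
    {S : Set (ℕ → ℝ)} (hS : MeasurableSet S) :
    P {ω | (fun i => F i ω) ∈ S} = P {ω | (fun i => G i ω) ∈ S} := by
  have mF : Measurable fun ω => (fun i => F i ω) := measurable_pi_lambda _ hF
  have mG : Measurable fun ω => (fun i => G i ω) := measurable_pi_lambda _ hG
  have h1 : P {ω | (fun i => F i ω) ∈ S} = Measure.map (fun ω i => F i ω) P S := by
    rw [Measure.map_apply mF hS]; rfl
  have h2 : P {ω | (fun i => G i ω) ∈ S} = Measure.map (fun ω i => G i ω) P S := by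
    rw [Measure.map_apply mG hS]; rfl
  rw [h1, h2, h]

lemma eqdist_pair {F G : ℕ → Ω → ℝ} (hF : ∀ i, Measurable (F i))
    (hG : ∀ i, Measurable (G i)) (h : EqDistFam P P F G) (s t : ℕ)
    {B : Set (ℝ × ℝ)} (hB : MeasurableSet B) :
    P {ω | (F s ω, F t ω) ∈ B} = P {ω | (G s ω, G t ω) ∈ B} := by
  have hmap : Measurable fun x : ℕ → ℝ => (x s, x t) :=
    (measurable_pi_apply s).prodMk (measurable_pi_apply t)
  exact eqdist_apply P hF hG h (hmap hB)

lemma eqdist_sumpair {F G : ℕ → Ω → ℝ} (hF : ∀ i, Measurable (F i))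
    (hG : ∀ i, Measurable (G i)) (h : EqDistFam P P F G) (s t : ℕ)
    {B : Set (ℝ × ℝ)} (hB : MeasurableSet B) :
    P {ω | (∑ j ∈ Finset.range s, F j ω, ∑ j ∈ Finset.range t, F j ω) ∈ B} =
      P {ω | (∑ j ∈ Finset.range s, G j ω, ∑ j ∈ Finset.range t, G j ω) ∈ B} := by
  have hmap : Measurable fun x : ℕ → ℝ =>
      (∑ j ∈ Finset.range s, x j, ∑ j ∈ Finset.range t, x j) := by
    apply Measurable.prodMk <;>
      exact Finset.measurable_sum _ (fun j _ => measurable_pi_apply j)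
  exact eqdist_apply P hF hG h (hmap hB)


variable (p : ℕ) (H : ℝ)

lemma dil_pair (hXmeas : ∀ n, Measurable (X n))
    (hss : SelfSimilar P X (fun n => (padicNormNat p n) ^ H))
    {a : ℕ} (ha : 1 ≤ a) (s t : ℕ) {B : Set (ℝ × ℝ)} (hB : MeasurableSet B) :
    P {ω | (X (a * s) ω, X (a * t) ω) ∈ B} =
      P {ω | ((padicNormNat p a) ^ H * X s ω, (padicNormNat p a) ^ H * X t ω) ∈ B} :=
  eqdist_pair P (fun i => hXmeas (a * i)) (fun i => (hXmeas i).const_mul _)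
    (hss a ha) s t hB

lemma shift_pair (hXmeas : ∀ n, Measurable (X n))
    (hsi : StationaryIncrements P X)
    {c : ℕ} (hc : 1 ≤ c) (s t : ℕ) {B : Set (ℝ × ℝ)} (hB : MeasurableSet B) :
    P {ω | (X (s + c) ω - X c ω, X (t + c) ω - X c ω) ∈ B} =
      P {ω | (X s ω - X 0 ω, X t ω - X 0 ω) ∈ B} := by
  have hF : ∀ i : ℕ, Measurable (fun ω => X (i + 1) ω - X i ω) :=
    fun i => (hXmeas (i + 1)).sub (hXmeas i)
  have hG : ∀ i : ℕ, Measurable (fun ω => X (i + c + 1) ω - X (i + c) ω) :=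
    fun i => (hXmeas (i + c + 1)).sub (hXmeas (i + c))
  have h := eqdist_sumpair P hF hG (hsi c hc) s t hB
  have e1 : ∀ (u : ℕ) (ω : Ω),
      (∑ j ∈ Finset.range u, (X (j + 1) ω - X j ω)) = X u ω - X 0 ω :=
    fun u ω => Finset.sum_range_sub (fun j => X j ω) u
  have e2 : ∀ (u : ℕ) (ω : Ω),
      (∑ j ∈ Finset.range u, (X (j + c + 1) ω - X (j + c) ω)) = X (u + c) ω - X c ω := by
    intro u ω
    have h0 : ∀ j : ℕ, X (j + c + 1) ω - X (j + c) ω = X ((j + 1) + c) ω - X (j + c) ω := by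
      intro j
      have : j + c + 1 = (j + 1) + c := by omega
      rw [this]
    calc (∑ j ∈ Finset.range u, (X (j + c + 1) ω - X (j + c) ω))
        = ∑ j ∈ Finset.range u, (X ((j + 1) + c) ω - X (j + c) ω) :=
          Finset.sum_congr rfl (fun j _ => h0 j)
      _ = X (u + c) ω - X (0 + c) ω := Finset.sum_range_sub (fun j => X (j + c) ω) u
      _ = X (u + c) ω - X c ω := by rw [Nat.zero_add]
  simp only [e1, e2] at h
  exact h.symm

lemma tail_meas (f : Ω → ℝ) (hf : Measurable f) :
    Tendsto (fun n : ℕ => P {ω | (n : ℝ) ≤ |f ω|}) atTop (𝓝 0) := by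
  have h0 : (⋂ n : ℕ, {ω | (n : ℝ) ≤ |f ω|}) = ∅ := by
    ext ω
    simp only [Set.mem_iInter, Set.mem_setOf_eq, Set.mem_empty_iff_false, iff_false,
      not_forall, not_le]
    obtain ⟨n, hn⟩ := exists_nat_gt (|f ω|)
    exact ⟨n, hn⟩
  have hmeas : ∀ n : ℕ, NullMeasurableSet {ω | (n : ℝ) ≤ |f ω|} P :=
    fun n => (measurableSet_le measurable_const hf.abs).nullMeasurableSet
  have hanti : Antitone fun n : ℕ => {ω | (n : ℝ) ≤ |f ω|} := by
    intro m n hmn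
    exact fun ω hω => le_trans (by exact_mod_cast hmn : (m:ℝ) ≤ (n:ℝ)) hω
  have := tendsto_measure_iInter_atTop (μ := P) hmeas hanti ⟨0, measure_ne_top _ _⟩
  rw [h0] at this
  simpa [Function.comp_def] using this

lemma tail_small (f : Ω → ℝ) (hf : Measurable f) {ε : ℝ≥0∞} (hε : 0 < ε) :
    ∃ n : ℕ, P {ω | (n : ℝ) ≤ |f ω|} ≤ ε := by
  have := (ENNReal.tendsto_nhds_zero.mp (tail_meas P f hf)) ε hε
  exact this.exists


lemma meas_congr_ae0 (hae : ∀ᵐ ω ∂P, X 0 ω = 0) {S T : Set Ω}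
    (h : ∀ ω, X 0 ω = 0 → (ω ∈ S ↔ ω ∈ T)) : P S = P T := by
  apply measure_congr
  filter_upwards [hae] with ω h0
  exact propext (h ω h0)

lemma ae_X0 (hXmeas : ∀ n, Measurable (X n)) (hp : p.Prime) (hH : 0 < H)
    (hss : SelfSimilar P X (fun n => (padicNormNat p n) ^ H)) :
    ∀ᵐ ω ∂P, X 0 ω = 0 := by
  have key2 : ∀ δ : ℝ, 0 < δ → ∀ ε : ℝ≥0∞, 0 < ε → P {ω | δ ≤ |X 0 ω|} ≤ ε := by
    intro δ hδ ε hε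
    have hdil : ∀ k : ℕ, P {ω | δ ≤ |X 0 ω|} =
        P {ω | δ / ((padicNormNat p (p ^ k)) ^ H) ≤ |X 0 ω|} := by
      intro k
      have hpk : 1 ≤ p ^ k := Nat.one_le_pow _ _ hp.pos
      have hbpos : 0 < (padicNormNat p (p ^ k)) ^ H :=
        bf_pos hp H (pow_ne_zero _ hp.ne_zero)
      have hB : MeasurableSet {z : ℝ × ℝ | δ ≤ |z.1|} :=
        measurableSet_le measurable_const measurable_fst.abs
      have h := dil_pair P X p H hXmeas hss hpk 0 0 hB
      simp only [Nat.mul_zero] at h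
      have e1 : {ω | (X 0 ω, X 0 ω) ∈ {z : ℝ × ℝ | δ ≤ |z.1|}} = {ω | δ ≤ |X 0 ω|} := rfl
      have e2 : {ω | ((padicNormNat p (p ^ k)) ^ H * X 0 ω,
          (padicNormNat p (p ^ k)) ^ H * X 0 ω) ∈ {z : ℝ × ℝ | δ ≤ |z.1|}} =
          {ω | δ / ((padicNormNat p (p ^ k)) ^ H) ≤ |X 0 ω|} := by
        ext ω
        simp only [Set.mem_setOf_eq, abs_mul, abs_of_pos hbpos]
        rw [div_le_iff₀ hbpos, mul_comm]
      rw [e1, e2] at h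
      exact h
    obtain ⟨n, hn⟩ := tail_small P (X 0) (hXmeas 0) hε
    have hbf : Tendsto (fun k => (padicNormNat p (p ^ k)) ^ H) atTop (𝓝 0) :=
      bf_small_general hp hH (g := fun k => p ^ k) (e := id)
        (fun k => ⟨1, one_ne_zero, (one_mul _).symm⟩) tendsto_id
    have hev : ∀ᶠ k in atTop, (padicNormNat p (p ^ k)) ^ H < δ / (n + 1) :=
      hbf.eventually_lt_const (by positivity)
    obtain ⟨k, hk⟩ := hev.exists
    rw [hdil k]
    refine le_trans (measure_mono ?_) hn
    intro ω hω
    have hbpos : 0 < (padicNormNat p (p ^ k)) ^ H := bf_pos hp H (pow_ne_zero _ hp.ne_zero)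
    have h1 : ((n : ℝ) + 1) * ((padicNormNat p (p ^ k)) ^ H) ≤ δ := by
      calc ((n : ℝ) + 1) * ((padicNormNat p (p ^ k)) ^ H)
          ≤ ((n : ℝ) + 1) * (δ / (n + 1)) :=
            mul_le_mul_of_nonneg_left hk.le (by positivity)
        _ = δ := by field_simp
    have h2 : ((n : ℝ) + 1) ≤ δ / ((padicNormNat p (p ^ k)) ^ H) :=
      (le_div_iff₀ hbpos).mpr h1
    have h3 : ((n : ℝ)) ≤ δ / ((padicNormNat p (p ^ k)) ^ H) := by linarith
    exact le_trans h3 hω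
  have key : ∀ δ : ℝ, 0 < δ → P {ω | δ ≤ |X 0 ω|} = 0 := by
    intro δ hδ
    refine le_zero_iff.mp ?_
    refine ENNReal.le_of_forall_pos_le_add fun ε hε _ => ?_
    simpa using key2 δ hδ (ε : ℝ≥0∞) (by exact_mod_cast hε)
  have hzero : P {ω | X 0 ω ≠ 0} = 0 := by
    have hsub : {ω | X 0 ω ≠ 0} ⊆ ⋃ n : ℕ, {ω | (1 : ℝ) / (n + 1) ≤ |X 0 ω|} := by
      intro ω hω
      obtain ⟨n, hn⟩ := exists_nat_one_div_lt (abs_pos.mpr hω)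
      exact Set.mem_iUnion.mpr ⟨n, hn.le⟩
    refine measure_mono_null hsub ?_
    rw [measure_iUnion_null_iff]
    intro n; exact key _ (by positivity)
  exact ae_iff.mpr (by simpa using hzero)


lemma nat_le_div_of_lt {eps bfv : ℝ} (heps : 0 < eps) (hb : 0 < bfv) (n : ℕ)
    (hk : bfv < eps / (n + 1)) : (n : ℝ) ≤ eps / bfv := by
  have h1 : ((n : ℝ) + 1) * bfv ≤ eps := by
    calc ((n : ℝ) + 1) * bfv ≤ ((n : ℝ) + 1) * (eps / (n + 1)) :=
          mul_le_mul_of_nonneg_left hk.le (by positivity)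
      _ = eps := by field_simp
  have h2 := (le_div_iff₀ hb).mpr h1
  linarith

lemma aprob (hXmeas : ∀ n, Measurable (X n)) (hp : p.Prime) (hH : 0 < H)
    (hss : SelfSimilar P X (fun n => (padicNormNat p n) ^ H)) {t : ℕ} (ht : 1 ≤ t) :
    P {ω | X t ω = 0} = P {ω | X 1 ω = 0} := by
  have hB : MeasurableSet {z : ℝ × ℝ | z.1 = 0} :=
    measurableSet_eq_fun measurable_fst measurable_const
  have h := dil_pair P X p H hXmeas hss ht 1 1 hB
  simp only [Nat.mul_one] at h
  have hbne : (padicNormNat p t) ^ H ≠ 0 := bf_ne_zero hp H (Nat.one_le_iff_ne_zero.mp ht)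
  have e2 : {ω | ((padicNormNat p t) ^ H * X 1 ω, (padicNormNat p t) ^ H * X 1 ω) ∈
      {z : ℝ × ℝ | z.1 = 0}} = {ω | X 1 ω = 0} := by
    ext ω
    simp only [Set.mem_setOf_eq, mul_eq_zero, hbne, false_or]
  rw [e2] at h
  exact h

lemma pairEq_lt (hXmeas : ∀ n, Measurable (X n)) (hp : p.Prime) (hH : 0 < H)
    (hss : SelfSimilar P X (fun n => (padicNormNat p n) ^ H))
    (hsi : StationaryIncrements P X) {s t : ℕ} (hst : s < t) :
    P {ω | X s ω = X t ω} = P {ω | X 1 ω = 0} := by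
  have hae := ae_X0 P X p H hXmeas hp hH hss
  by_cases hs : s = 0
  · subst hs
    have h0 : P {ω | X 0 ω = X t ω} = P {ω | X t ω = 0} := by
      apply meas_congr_ae0 P X hae
      intro ω h0
      simp only [Set.mem_setOf_eq, h0]
      exact eq_comm
    rw [h0]
    exact aprob P X p H hXmeas hp hH hss (by omega)
  · obtain ⟨u, hu1, rfl⟩ : ∃ u, 1 ≤ u ∧ t = u + s := ⟨t - s, by omega, by omega⟩
    have hB : MeasurableSet {z : ℝ × ℝ | z.1 = 0} :=
      measurableSet_eq_fun measurable_fst measurable_const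
    have h := shift_pair P X hXmeas hsi (show 1 ≤ s by omega) u u hB
    have e1 : {ω | (X (u + s) ω - X s ω, X (u + s) ω - X s ω) ∈
        {z : ℝ × ℝ | z.1 = 0}} = {ω | X s ω = X (u + s) ω} := by
      ext ω
      simp only [Set.mem_setOf_eq, sub_eq_zero]
      exact eq_comm
    have e2 : P {ω | (X u ω - X 0 ω, X u ω - X 0 ω) ∈ {z : ℝ × ℝ | z.1 = 0}} =
        P {ω | X u ω = 0} := by
      apply meas_congr_ae0 P X hae
      intro ω h0
      simp only [Set.mem_setOf_eq, h0, sub_zero]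
    rw [e1, e2] at h
    rw [h]
    exact aprob P X p H hXmeas hp hH hss hu1

lemma pairEq (hXmeas : ∀ n, Measurable (X n)) (hp : p.Prime) (hH : 0 < H)
    (hss : SelfSimilar P X (fun n => (padicNormNat p n) ^ H))
    (hsi : StationaryIncrements P X) {s t : ℕ} (hst : s ≠ t) :
    P {ω | X s ω = X t ω} = P {ω | X 1 ω = 0} := by
  rcases lt_or_gt_of_ne hst with h | h
  · exact pairEq_lt P X p H hXmeas hp hH hss hsi h
  · have e : {ω | X s ω = X t ω} = {ω | X t ω = X s ω} := by
      ext ω; exact eq_comm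
    rw [e]
    exact pairEq_lt P X p H hXmeas hp hH hss hsi h

lemma rho_dil (hXmeas : ∀ n, Measurable (X n)) (hp : p.Prime) (hH : 0 < H)
    (hss : SelfSimilar P X (fun n => (padicNormNat p n) ^ H))
    {a : ℕ} (ha : 1 ≤ a) (s t : ℕ) :
    P {ω | X (a * s) ω = 0 ∧ X (a * t) ω = 0} = P {ω | X s ω = 0 ∧ X t ω = 0} := by
  have hB : MeasurableSet {z : ℝ × ℝ | z.1 = 0 ∧ z.2 = 0} :=
    (measurableSet_eq_fun measurable_fst measurable_const).inter
      (measurableSet_eq_fun measurable_snd measurable_const)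
  have h := dil_pair P X p H hXmeas hss ha s t hB
  have hbne : (padicNormNat p a) ^ H ≠ 0 := bf_ne_zero hp H (Nat.one_le_iff_ne_zero.mp ha)
  have e2 : {ω | ((padicNormNat p a) ^ H * X s ω, (padicNormNat p a) ^ H * X t ω) ∈
      {z : ℝ × ℝ | z.1 = 0 ∧ z.2 = 0}} = {ω | X s ω = 0 ∧ X t ω = 0} := by
    ext ω
    simp only [Set.mem_setOf_eq, mul_eq_zero, hbne, false_or]
  rw [e2] at h
  exact h

lemma rho_shift (hXmeas : ∀ n, Measurable (X n)) (hp : p.Prime) (hH : 0 < H)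
    (hss : SelfSimilar P X (fun n => (padicNormNat p n) ^ H))
    (hsi : StationaryIncrements P X)
    {c : ℕ} (hc : 1 ≤ c) (s t : ℕ) :
    P {ω | X c ω = X (s + c) ω ∧ X c ω = X (t + c) ω} =
      P {ω | X s ω = 0 ∧ X t ω = 0} := by
  have hae := ae_X0 P X p H hXmeas hp hH hss
  have hB : MeasurableSet {z : ℝ × ℝ | z.1 = 0 ∧ z.2 = 0} :=
    (measurableSet_eq_fun measurable_fst measurable_const).inter
      (measurableSet_eq_fun measurable_snd measurable_const)
  have h := shift_pair P X hXmeas hsi hc s t hB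
  have e1 : {ω | (X (s + c) ω - X c ω, X (t + c) ω - X c ω) ∈
      {z : ℝ × ℝ | z.1 = 0 ∧ z.2 = 0}} =
      {ω | X c ω = X (s + c) ω ∧ X c ω = X (t + c) ω} := by
    ext ω
    simp only [Set.mem_setOf_eq, sub_eq_zero]
    constructor
    · rintro ⟨h1, h2⟩; exact ⟨h1.symm, h2.symm⟩
    · rintro ⟨h1, h2⟩; exact ⟨h1.symm, h2.symm⟩
  have e2 : P {ω | (X s ω - X 0 ω, X t ω - X 0 ω) ∈
      {z : ℝ × ℝ | z.1 = 0 ∧ z.2 = 0}} = P {ω | X s ω = 0 ∧ X t ω = 0} := by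
    apply meas_congr_ae0 P X hae
    intro ω h0
    simp only [Set.mem_setOf_eq, h0, sub_zero]
  rw [e1, e2] at h
  exact h

lemma diff_small (hXmeas : ∀ n, Measurable (X n)) (hp : p.Prime) (hH : 0 < H)
    (hss : SelfSimilar P X (fun n => (padicNormNat p n) ^ H))
    (hsi : StationaryIncrements P X)
    {u : ℕ} (hu : 1 ≤ u) (w g : ℕ → ℕ)
    (hwg : ∀ k, w k = g k + u) (hg1 : ∀ k, 1 ≤ g k)
    (hgb : Tendsto (fun k => (padicNormNat p (g k)) ^ H) atTop (𝓝 0)) :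
    TendstoInMeasure P (fun k ω => X (w k) ω) atTop (X u) := by
  have hae := ae_X0 P X p H hXmeas hp hH hss
  rw [tendstoInMeasure_iff_dist]
  intro ε hε
  have hB : MeasurableSet {z : ℝ × ℝ | ε ≤ |z.1|} :=
    measurableSet_le measurable_const measurable_fst.abs
  have hpoint : ∀ k, P {ω | ε ≤ dist (X (w k) ω) (X u ω)} =
      P {ω | ε / ((padicNormNat p (g k)) ^ H) ≤ |X 1 ω|} := by
    intro k
    have hbpos : 0 < (padicNormNat p (g k)) ^ H := bf_pos hp H (Nat.one_le_iff_ne_zero.mp (hg1 k))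
    have e0 : {ω | ε ≤ dist (X (w k) ω) (X u ω)} =
        {ω | (X (g k + u) ω - X u ω, X (g k + u) ω - X u ω) ∈
          {z : ℝ × ℝ | ε ≤ |z.1|}} := by
      ext ω
      simp only [Set.mem_setOf_eq, Real.dist_eq, hwg k]
    have h1 := shift_pair P X hXmeas hsi hu (g k) (g k) hB
    have e1 : P {ω | (X (g k) ω - X 0 ω, X (g k) ω - X 0 ω) ∈
        {z : ℝ × ℝ | ε ≤ |z.1|}} =
        P {ω | (X (g k) ω, X (g k) ω) ∈ {z : ℝ × ℝ | ε ≤ |z.1|}} := by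
      apply meas_congr_ae0 P X hae
      intro ω h0
      simp only [Set.mem_setOf_eq, h0, sub_zero]
    have h2 := dil_pair P X p H hXmeas hss (hg1 k) 1 1 hB
    simp only [Nat.mul_one] at h2
    have e2 : {ω | ((padicNormNat p (g k)) ^ H * X 1 ω,
        (padicNormNat p (g k)) ^ H * X 1 ω) ∈ {z : ℝ × ℝ | ε ≤ |z.1|}} =
        {ω | ε / ((padicNormNat p (g k)) ^ H) ≤ |X 1 ω|} := by
      ext ω
      simp only [Set.mem_setOf_eq, abs_mul, abs_of_pos hbpos]
      rw [div_le_iff₀ hbpos, mul_comm]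
    rw [e0, h1, e1, h2, e2]
  rw [show (fun k => P {ω | ε ≤ dist (X (w k) ω) (X u ω)}) =
      (fun k => P {ω | ε / ((padicNormNat p (g k)) ^ H) ≤ |X 1 ω|}) from funext hpoint]
  rw [ENNReal.tendsto_nhds_zero]
  intro η hη
  obtain ⟨n, hn⟩ := tail_small P (X 1) (hXmeas 1) hη
  have hev : ∀ᶠ k in atTop, (padicNormNat p (g k)) ^ H < ε / (n + 1) :=
    hgb.eventually_lt_const (by positivity)
  filter_upwards [hev] with k hk
  refine le_trans (measure_mono ?_) hn
  intro ω hω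
  have hbpos : 0 < (padicNormNat p (g k)) ^ H := bf_pos hp H (Nat.one_le_iff_ne_zero.mp (hg1 k))
  exact le_trans (nat_le_div_of_lt hε hbpos n hk) hω

lemma zero_small (hXmeas : ∀ n, Measurable (X n)) (hp : p.Prime) (hH : 0 < H)
    (hss : SelfSimilar P X (fun n => (padicNormNat p n) ^ H))
    (w : ℕ → ℕ) (hw1 : ∀ k, 1 ≤ w k)
    (hwb : Tendsto (fun k => (padicNormNat p (w k)) ^ H) atTop (𝓝 0)) :
    TendstoInMeasure P (fun k ω => X (w k) ω) atTop (fun _ => (0 : ℝ)) := by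
  rw [tendstoInMeasure_iff_dist]
  intro ε hε
  have hB : MeasurableSet {z : ℝ × ℝ | ε ≤ |z.1|} :=
    measurableSet_le measurable_const measurable_fst.abs
  have hpoint : ∀ k, P {ω | ε ≤ dist (X (w k) ω) ((fun _ => (0:ℝ)) ω)} =
      P {ω | ε / ((padicNormNat p (w k)) ^ H) ≤ |X 1 ω|} := by
    intro k
    have hbpos : 0 < (padicNormNat p (w k)) ^ H := bf_pos hp H (Nat.one_le_iff_ne_zero.mp (hw1 k))
    have e0 : {ω | ε ≤ dist (X (w k) ω) ((fun _ => (0:ℝ)) ω)} =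
        {ω | (X (w k) ω, X (w k) ω) ∈ {z : ℝ × ℝ | ε ≤ |z.1|}} := by
      ext ω
      simp only [Set.mem_setOf_eq, Real.dist_eq, sub_zero]
    have h2 := dil_pair P X p H hXmeas hss (hw1 k) 1 1 hB
    simp only [Nat.mul_one] at h2
    have e2 : {ω | ((padicNormNat p (w k)) ^ H * X 1 ω,
        (padicNormNat p (w k)) ^ H * X 1 ω) ∈ {z : ℝ × ℝ | ε ≤ |z.1|}} =
        {ω | ε / ((padicNormNat p (w k)) ^ H) ≤ |X 1 ω|} := by
      ext ω
      simp only [Set.mem_setOf_eq, abs_mul, abs_of_pos hbpos]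
      rw [div_le_iff₀ hbpos, mul_comm]
    rw [e0, h2, e2]
  rw [show (fun k => P {ω | ε ≤ dist (X (w k) ω) ((fun _ => (0:ℝ)) ω)}) =
      (fun k => P {ω | ε / ((padicNormNat p (w k)) ^ H) ≤ |X 1 ω|}) from funext hpoint]
  rw [ENNReal.tendsto_nhds_zero]
  intro η hη
  obtain ⟨n, hn⟩ := tail_small P (X 1) (hXmeas 1) hη
  have hev : ∀ᶠ k in atTop, (padicNormNat p (w k)) ^ H < ε / (n + 1) :=
    hwb.eventually_lt_const (by positivity)
  filter_upwards [hev] with k hk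
  refine le_trans (measure_mono ?_) hn
  intro ω hω
  have hbpos : 0 < (padicNormNat p (w k)) ^ H := bf_pos hp H (Nat.one_le_iff_ne_zero.mp (hw1 k))
  exact le_trans (nat_le_div_of_lt hε hbpos n hk) hω


lemma core (V Y : Ω → ℝ) (W : ℕ → Ω → ℝ)
    (hV : Measurable V) (hY : Measurable Y) (hW : ∀ k, Measurable (W k))
    (q' : ℝ≥0∞) (hk : ∀ k, P {ω | V ω = W k ω} = q')
    (hq : P {ω | V ω = Y ω} = q')
    (hconv : TendstoInMeasure P W atTop Y) :
    Tendsto (fun k => P ({ω | V ω = W k ω} \ {ω | V ω = Y ω}) +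
      P ({ω | V ω = Y ω} \ {ω | V ω = W k ω})) atTop (𝓝 0) := by
  set C : Set Ω := {ω | V ω = Y ω} with hC
  have hCmeas : MeasurableSet C := measurableSet_eq_fun hV hY
  have hCk : ∀ k, MeasurableSet {ω | V ω = W k ω} :=
    fun k => measurableSet_eq_fun hV (hW k)
  have hsame : ∀ k, P (C \ {ω | V ω = W k ω}) = P ({ω | V ω = W k ω} \ C) := by
    intro k
    have h1 : P (C ∩ {ω | V ω = W k ω}) + P (C \ {ω | V ω = W k ω}) = P C :=
      measure_inter_add_diff C (hCk k)
    have h2 : P ({ω | V ω = W k ω} ∩ C) + P ({ω | V ω = W k ω} \ C) =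
        P {ω | V ω = W k ω} := measure_inter_add_diff _ hCmeas
    rw [Set.inter_comm] at h2
    rw [hq] at h1
    rw [hk k] at h2
    have h3 : P (C ∩ {ω | V ω = W k ω}) + P (C \ {ω | V ω = W k ω}) =
        P (C ∩ {ω | V ω = W k ω}) + P ({ω | V ω = W k ω} \ C) := by rw [h1, h2]
    exact (ENNReal.add_right_inj (measure_ne_top P _)).mp h3
  suffices hone : Tendsto (fun k => P ({ω | V ω = W k ω} \ C)) atTop (𝓝 0) by
    have h2 := hone.add hone
    rw [add_zero] at h2
    apply h2.congr
    intro k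
    rw [hsame k]
  apply tendsto_of_subseq_tendsto
  intro ns hns
  have hconv' : TendstoInMeasure P (fun i => W (ns i)) atTop Y :=
    fun ε hε => (hconv ε hε).comp hns
  obtain ⟨ms, hms, hae⟩ := hconv'.exists_seq_tendsto_ae
  refine ⟨ms, ?_⟩
  show Tendsto (fun n => P ({ω | V ω = W (ns (ms n)) ω} \ C)) atTop (𝓝 0)
  set φ : ℕ → ℕ := fun i => ns (ms i) with hφ
  set U : ℕ → Set Ω := fun J => ⋃ (j : ℕ) (_ : J ≤ j), {ω | V ω = W (φ j) ω} with hU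
  have hUmeas : ∀ J, MeasurableSet (U J) :=
    fun J => MeasurableSet.iUnion fun j => MeasurableSet.iUnion fun _ => hCk _
  have hUanti : Antitone U := by
    intro J1 J2 h12 ω hω
    obtain ⟨j, hj, hmem⟩ := by
      simpa only [hU, Set.mem_iUnion, exists_prop] using hω
    simp only [hU, Set.mem_iUnion, exists_prop]
    exact ⟨j, le_trans h12 hj, hmem⟩
  set L : Set Ω := ⋂ J, U J with hL
  have hLU : ∀ J, L ⊆ U J := fun J => Set.iInter_subset U J
  have hLmeas : MeasurableSet L := MeasurableSet.iInter hUmeas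
  have hPUL : Tendsto (fun J => P (U J)) atTop (𝓝 (P L)) := by
    have := tendsto_measure_iInter_atTop (μ := P)
      (fun J => (hUmeas J).nullMeasurableSet) hUanti ⟨0, measure_ne_top _ _⟩
    simpa [Function.comp_def] using this
  have hLC : P (L \ C) = 0 := by
    have hsubset : ∀ᵐ ω ∂P, ω ∈ L → ω ∈ C := by
      filter_upwards [hae] with ω hωconv hωL
      have hfreq : ∃ᶠ j in atTop, V ω = W (φ j) ω := by
        rw [frequently_atTop]
        intro J
        obtain ⟨j, hj, hmem⟩ := by
          simpa only [hU, Set.mem_iUnion, exists_prop] using (Set.mem_iInter.mp hωL J)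
        exact ⟨j, hj, hmem⟩
      by_contra hne
      have hd : 0 < |V ω - Y ω| := abs_pos.mpr (sub_ne_zero.mpr hne)
      have hev : ∀ᶠ j in atTop, dist (W (φ j) ω) (Y ω) < |V ω - Y ω| := by
        obtain ⟨N, hN⟩ := Metric.tendsto_atTop.mp hωconv (|V ω - Y ω|) hd
        exact eventually_atTop.mpr ⟨N, fun j hj => hN j hj⟩
      obtain ⟨j, hj1, hj2⟩ := (hfreq.and_eventually hev).exists
      rw [← hj1, Real.dist_eq] at hj2
      exact absurd hj2 (lt_irrefl _)
    have hsub2 : L \ C ⊆ {ω | ¬ (ω ∈ L → ω ∈ C)} := by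
      rintro ω ⟨h1, h2⟩
      simp only [Set.mem_setOf_eq]
      intro hcon
      exact h2 (hcon h1)
    exact measure_mono_null hsub2 (ae_iff.mp hsubset)
  have hPLle : P L ≤ q' := by
    calc P L = P (L ∩ C) + P (L \ C) := (measure_inter_add_diff L hCmeas).symm
      _ = P (L ∩ C) := by rw [hLC, add_zero]
      _ ≤ P C := measure_mono Set.inter_subset_right
      _ = q' := hq
  have hPLge : q' ≤ P L := by
    refine ge_of_tendsto' hPUL (fun J => ?_)
    calc q' = P {ω | V ω = W (φ J) ω} := (hk _).symm
      _ ≤ P (U J) := measure_mono (fun ω hω => by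
          simp only [hU, Set.mem_iUnion, exists_prop]
          exact ⟨J, le_rfl, hω⟩)
  have hPL : P L = q' := le_antisymm hPLle hPLge
  have hbound : ∀ J, P ({ω | V ω = W (φ J) ω} \ C) ≤ (P (U J) - P L) + P (L \ C) := by
    intro J
    have hsub : {ω | V ω = W (φ J) ω} \ C ⊆ (U J \ L) ∪ (L \ C) := by
      rintro ω ⟨h1, h2⟩
      by_cases hωL : ω ∈ L
      · exact Or.inr ⟨hωL, h2⟩
      · refine Or.inl ⟨?_, hωL⟩
        simp only [hU, Set.mem_iUnion, exists_prop]
        exact ⟨J, le_rfl, h1⟩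
    calc P ({ω | V ω = W (φ J) ω} \ C) ≤ P ((U J \ L) ∪ (L \ C)) := measure_mono hsub
      _ ≤ P (U J \ L) + P (L \ C) := measure_union_le _ _
      _ = (P (U J) - P L) + P (L \ C) := by
          rw [measure_diff (hLU J) hLmeas.nullMeasurableSet (measure_ne_top P L)]
  have hrhs : Tendsto (fun J => (P (U J) - P L) + P (L \ C)) atTop (𝓝 0) := by
    simp only [hLC, add_zero]
    have := ENNReal.Tendsto.sub hPUL (tendsto_const_nhds (x := P L))
      (Or.inr (measure_ne_top P L))
    simpa [tsub_self] using this
  exact tendsto_of_tendsto_of_tendsto_of_le_of_le tendsto_const_nhds hrhs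
    (fun J => zero_le) hbound


set_option maxHeartbeats 2000000 in
lemma rho_reflect (hXmeas : ∀ n, Measurable (X n)) (hp : p.Prime) (hH : 0 < H)
    (hss : SelfSimilar P X (fun n => (padicNormNat p n) ^ H))
    (hsi : StationaryIncrements P X)
    {a b : ℕ} (ha : 1 ≤ a) (hab : a < b) :
    P {ω | X a ω = 0 ∧ X b ω = 0} = P {ω | X (b - a) ω = 0 ∧ X b ω = 0} := by
  have hb1 : 1 ≤ b := by omega
  have hmk : ∀ k : ℕ, 2 ≤ p ^ (k + 1) := by
    intro k
    calc 2 ≤ p := hp.two_le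
      _ ≤ p ^ (k + 1) := Nat.le_self_pow (by omega) p
  set sK : ℕ → ℕ := fun k => (p ^ (k + 1) - 1) * a with hsK
  set tK : ℕ → ℕ := fun k => (p ^ (k + 1) - 1) * b with htK
  have hsK1 : ∀ k, 1 ≤ sK k := by
    intro k
    have := hmk k
    simp only [hsK]
    exact Nat.one_le_iff_ne_zero.mpr (Nat.mul_ne_zero (by omega) (by omega))
  have htK1 : ∀ k, 1 ≤ tK k := by
    intro k
    have := hmk k
    simp only [htK]
    exact Nat.one_le_iff_ne_zero.mpr (Nat.mul_ne_zero (by omega) (by omega))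
  -- the exact identity at each k
  have hconst : ∀ k, P ({ω | X b ω = X (sK k + b) ω} ∩ {ω | X b ω = X (tK k + b) ω}) =
      P {ω | X a ω = 0 ∧ X b ω = 0} := by
    intro k
    have h1 : {ω | X b ω = X (sK k + b) ω} ∩ {ω | X b ω = X (tK k + b) ω} =
        {ω | X b ω = X (sK k + b) ω ∧ X b ω = X (tK k + b) ω} := rfl
    rw [h1, rho_shift P X p H hXmeas hp hH hss hsi hb1 (sK k) (tK k)]
    exact rho_dil P X p H hXmeas hp hH hss
      (show 1 ≤ p ^ (k + 1) - 1 by have := hmk k; omega) a b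
  -- index arithmetic
  have hsKe : ∀ k, sK k + b = a * p ^ (k + 1) + (b - a) := by
    intro k
    have h1 : (p ^ (k + 1) - 1) * a = a * p ^ (k + 1) - a := by
      rw [Nat.sub_mul, one_mul, mul_comm]
    have h2 : a ≤ a * p ^ (k + 1) := Nat.le_mul_of_pos_right a (by have := hmk k; omega)
    simp only [hsK, h1]
    omega
  have htKe : ∀ k, tK k + b = b * p ^ (k + 1) := by
    intro k
    have h1 : (p ^ (k + 1) - 1) * b = b * p ^ (k + 1) - b := by
      rw [Nat.sub_mul, one_mul, mul_comm]
    have h2 : b ≤ b * p ^ (k + 1) := Nat.le_mul_of_pos_right b (by have := hmk k; omega)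
    simp only [htK, h1]
    omega
  have hpow_tendsto : Tendsto (fun k : ℕ => k + 1) atTop atTop :=
    tendsto_add_atTop_nat 1
  -- CORE applications
  have hT1 : Tendsto (fun k => P ({ω | X b ω = X (sK k + b) ω} \ {ω | X b ω = X (b - a) ω}) +
      P ({ω | X b ω = X (b - a) ω} \ {ω | X b ω = X (sK k + b) ω})) atTop (𝓝 0) := by
    refine core P (X b) (X (b - a)) (fun k ω => X (sK k + b) ω) (hXmeas b)
      (hXmeas (b - a)) (fun k => hXmeas _) (P {ω | X 1 ω = 0}) (fun k => ?_) ?_ ?_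
    · exact pairEq P X p H hXmeas hp hH hss hsi (s := b) (t := sK k + b)
        (by have := hsK1 k; omega)
    · exact pairEq P X p H hXmeas hp hH hss hsi (s := b) (t := b - a) (by omega)
    · refine diff_small P X p H hXmeas hp hH hss hsi (show 1 ≤ b - a by omega)
        (fun k => sK k + b) (fun k => a * p ^ (k + 1)) hsKe
        (fun k => Nat.one_le_iff_ne_zero.mpr (Nat.mul_ne_zero (by omega)
          (by have := hmk k; omega))) ?_
      exact bf_small_general hp hH (g := fun k => a * p ^ (k + 1)) (e := fun k => k + 1)
        (fun k => ⟨a, by omega, rfl⟩) hpow_tendsto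
  have hT2 : Tendsto (fun k => P ({ω | X b ω = X (tK k + b) ω} \ {ω | X b ω = 0}) +
      P ({ω | X b ω = 0} \ {ω | X b ω = X (tK k + b) ω})) atTop (𝓝 0) := by
    refine core P (X b) (fun _ => (0 : ℝ)) (fun k ω => X (tK k + b) ω) (hXmeas b)
      measurable_const (fun k => hXmeas _) (P {ω | X 1 ω = 0}) (fun k => ?_) ?_ ?_
    · exact pairEq P X p H hXmeas hp hH hss hsi (s := b) (t := tK k + b)
        (by have := htK1 k; omega)
    · exact aprob P X p H hXmeas hp hH hss hb1
    · refine zero_small P X p H hXmeas hp hH hss (fun k => tK k + b)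
        (fun k => by show 1 ≤ tK k + b; have := htK1 k; omega) ?_
      have heq : (fun k => (padicNormNat p (tK k + b)) ^ H) =
          (fun k => (padicNormNat p (b * p ^ (k + 1))) ^ H) :=
        funext (fun k => by rw [htKe k])
      rw [heq]
      exact bf_small_general hp hH (g := fun k => b * p ^ (k + 1)) (e := fun k => k + 1)
        (fun k => ⟨b, by omega, rfl⟩) hpow_tendsto
  set E : Set Ω := {ω | X b ω = X (b - a) ω} with hE
  set E' : Set Ω := {ω | X b ω = 0} with hE'
  set Ek : ℕ → Set Ω := fun k => {ω | X b ω = X (sK k + b) ω} with hEk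
  set E'k : ℕ → Set Ω := fun k => {ω | X b ω = X (tK k + b) ω} with hE'k
  -- two inequalities
  have hle1 : P {ω | X a ω = 0 ∧ X b ω = 0} ≤ P (E ∩ E') := by
    have hbd : ∀ k, P {ω | X a ω = 0 ∧ X b ω = 0} ≤ P (E ∩ E') +
        ((P (Ek k \ E) + P (E \ Ek k)) + (P (E'k k \ E') + P (E' \ E'k k))) := by
      intro k
      rw [← hconst k]
      have hsub : Ek k ∩ E'k k ⊆ (E ∩ E') ∪ ((Ek k \ E) ∪ (E'k k \ E')) := by
        rintro ω ⟨h1, h2⟩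
        by_cases hEω : ω ∈ E
        · by_cases hE'ω : ω ∈ E'
          · exact Or.inl ⟨hEω, hE'ω⟩
          · exact Or.inr (Or.inr ⟨h2, hE'ω⟩)
        · exact Or.inr (Or.inl ⟨h1, hEω⟩)
      calc P (Ek k ∩ E'k k) ≤ P ((E ∩ E') ∪ ((Ek k \ E) ∪ (E'k k \ E'))) :=
            measure_mono hsub
        _ ≤ P (E ∩ E') + P ((Ek k \ E) ∪ (E'k k \ E')) := measure_union_le _ _
        _ ≤ P (E ∩ E') + (P (Ek k \ E) + P (E'k k \ E')) := by
            exact add_le_add le_rfl (measure_union_le _ _)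
        _ ≤ P (E ∩ E') + ((P (Ek k \ E) + P (E \ Ek k)) +
              (P (E'k k \ E') + P (E' \ E'k k))) := by
            refine add_le_add le_rfl (add_le_add le_self_add le_self_add)
    have hrhs : Tendsto (fun k => P (E ∩ E') +
        ((P (Ek k \ E) + P (E \ Ek k)) + (P (E'k k \ E') + P (E' \ E'k k))))
        atTop (𝓝 (P (E ∩ E'))) := by
      have := (tendsto_const_nhds (x := P (E ∩ E')) (f := atTop)).add (hT1.add hT2)
      simpa using this
    exact ge_of_tendsto' hrhs hbd
  have hle2 : P (E ∩ E') ≤ P {ω | X a ω = 0 ∧ X b ω = 0} := by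
    have hbd : ∀ k, P (E ∩ E') ≤ P {ω | X a ω = 0 ∧ X b ω = 0} +
        ((P (Ek k \ E) + P (E \ Ek k)) + (P (E'k k \ E') + P (E' \ E'k k))) := by
      intro k
      rw [← hconst k]
      have hsub : E ∩ E' ⊆ (Ek k ∩ E'k k) ∪ ((E \ Ek k) ∪ (E' \ E'k k)) := by
        rintro ω ⟨h1, h2⟩
        by_cases hEω : ω ∈ Ek k
        · by_cases hE'ω : ω ∈ E'k k
          · exact Or.inl ⟨hEω, hE'ω⟩
          · exact Or.inr (Or.inr ⟨h2, hE'ω⟩)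
        · exact Or.inr (Or.inl ⟨h1, hEω⟩)
      calc P (E ∩ E') ≤ P ((Ek k ∩ E'k k) ∪ ((E \ Ek k) ∪ (E' \ E'k k))) :=
            measure_mono hsub
        _ ≤ P (Ek k ∩ E'k k) + P ((E \ Ek k) ∪ (E' \ E'k k)) := measure_union_le _ _
        _ ≤ P (Ek k ∩ E'k k) + (P (E \ Ek k) + P (E' \ E'k k)) :=
            add_le_add le_rfl (measure_union_le _ _)
        _ ≤ P (Ek k ∩ E'k k) + ((P (Ek k \ E) + P (E \ Ek k)) +
              (P (E'k k \ E') + P (E' \ E'k k))) := by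
            refine add_le_add le_rfl (add_le_add le_add_self le_add_self)
    have hrhs : Tendsto (fun k => P {ω | X a ω = 0 ∧ X b ω = 0} +
        ((P (Ek k \ E) + P (E \ Ek k)) + (P (E'k k \ E') + P (E' \ E'k k))))
        atTop (𝓝 (P {ω | X a ω = 0 ∧ X b ω = 0})) := by
      have := (tendsto_const_nhds (x := P {ω | X a ω = 0 ∧ X b ω = 0})
        (f := atTop)).add (hT1.add hT2)
      simpa using this
    exact ge_of_tendsto' hrhs hbd
  have hEE' : E ∩ E' = {ω | X (b - a) ω = 0 ∧ X b ω = 0} := by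
    ext ω
    constructor
    · rintro ⟨h1, h2⟩
      exact ⟨(h1.symm.trans h2 : X (b - a) ω = 0), h2⟩
    · rintro ⟨h1, h2⟩
      exact ⟨(h2.trans h1.symm : X b ω = X (b - a) ω), h2⟩
  rw [← hEE']
  exact le_antisymm hle1 hle2


lemma ennreal_squeeze_zero {f g : ℕ → ℝ≥0∞} (hle : ∀ k, f k ≤ g k)
    (hg : Tendsto g atTop (𝓝 0)) : Tendsto f atTop (𝓝 0) := by
  rw [ENNReal.tendsto_nhds_zero] at hg ⊢
  intro ε hε
  filter_upwards [hg ε hε] with k hk using le_trans (hle k) hk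

lemma rho_comm (x y : ℕ) :
    P {ω | X x ω = 0 ∧ X y ω = 0} = P {ω | X y ω = 0 ∧ X x ω = 0} := by
  have : {ω | X x ω = 0 ∧ X y ω = 0} = {ω | X y ω = 0 ∧ X x ω = 0} := by
    ext ω; exact and_comm
  rw [this]

lemma rho_tri (hXmeas : ∀ n, Measurable (X n)) (hp : p.Prime) (hH : 0 < H)
    (hss : SelfSimilar P X (fun n => (padicNormNat p n) ^ H))
    {x y z : ℕ} (hy : 1 ≤ y) :
    P {ω | X x ω = 0 ∧ X y ω = 0} + P {ω | X y ω = 0 ∧ X z ω = 0} ≤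
      P {ω | X 1 ω = 0} + P {ω | X x ω = 0 ∧ X z ω = 0} := by
  have hxy : {ω | X x ω = 0 ∧ X y ω = 0} =
      ({ω | X x ω = 0} ∩ {ω | X y ω = 0}) := rfl
  have hyz : {ω | X y ω = 0 ∧ X z ω = 0} =
      ({ω | X y ω = 0} ∩ {ω | X z ω = 0}) := rfl
  have hmeas : MeasurableSet ({ω | X y ω = 0} ∩ {ω | X z ω = 0}) :=
    (measurableSet_eq_fun (hXmeas y) measurable_const).inter
      (measurableSet_eq_fun (hXmeas z) measurable_const)
  have key := measure_union_add_inter (μ := P)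
    ({ω | X x ω = 0} ∩ {ω | X y ω = 0}) hmeas
  rw [hxy, hyz, ← key]
  apply add_le_add
  · refine le_trans (measure_mono ?_) (le_of_eq (aprob P X p H hXmeas hp hH hss hy))
    rintro ω (⟨_, h⟩ | ⟨h, _⟩) <;> exact h
  · refine measure_mono ?_
    rintro ω ⟨⟨h1, _⟩, ⟨_, h2⟩⟩
    exact ⟨h1, h2⟩

set_option maxHeartbeats 1000000 in
lemma rho_eq_q (hXmeas : ∀ n, Measurable (X n)) (hp : p.Prime) (hH : 0 < H)
    (hss : SelfSimilar P X (fun n => (padicNormNat p n) ^ H))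
    (hsi : StationaryIncrements P X)
    {u v : ℕ} (hu : 1 ≤ u) (hv : 1 ≤ v) (huv : u ≠ v) :
    P {ω | X u ω = 0 ∧ X v ω = 0} = P {ω | X 1 ω = 0} := by
  have hq_le : P {ω | X u ω = 0 ∧ X v ω = 0} ≤ P {ω | X 1 ω = 0} := by
    calc P {ω | X u ω = 0 ∧ X v ω = 0} ≤ P {ω | X u ω = 0} :=
        measure_mono (fun ω h => h.1)
      _ = P {ω | X 1 ω = 0} := aprob P X p H hXmeas hp hH hss hu
  refine le_antisymm hq_le ?_
  have aprob' : ∀ {w : ℕ}, 1 ≤ w → P {ω | (0:ℝ) = X w ω} = P {ω | X 1 ω = 0} := by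
    intro w hw
    have hsw : {ω | (0:ℝ) = X w ω} = {ω | X w ω = 0} := by ext ω; exact eq_comm
    rw [hsw]
    exact aprob P X p H hXmeas hp hH hss hw
  have hpK1 : ∀ K : ℕ, 1 ≤ p ^ K := fun K => Nat.one_le_pow _ _ hp.pos
  have hpKlt : ∀ K : ℕ, p ^ K < p ^ (K + 1) :=
    fun K => Nat.pow_lt_pow_right hp.one_lt (by omega)
  -- generic per-time construction
  have main : ∀ w : ℕ, 1 ≤ w →
      (∀ K, P {ω | (0:ℝ) = X w ω} ≤
        P {ω | X (p ^ K) ω = 0 ∧ X (w * p ^ (K + 1) + w) ω = 0} +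
        (P ({ω | (0:ℝ) = X w ω} \ {ω | (0:ℝ) = X (w * p ^ (K + 1) - p ^ K + w) ω}) +
         P ({ω | (0:ℝ) = X w ω} \ {ω | (0:ℝ) = X (w * p ^ (K + 1) + w) ω}))) ∧
      Tendsto (fun K =>
        (P ({ω | (0:ℝ) = X w ω} \ {ω | (0:ℝ) = X (w * p ^ (K + 1) - p ^ K + w) ω}) +
         P ({ω | (0:ℝ) = X w ω} \ {ω | (0:ℝ) = X (w * p ^ (K + 1) + w) ω})))
        atTop (𝓝 0) := by
    intro w hw
    have hple : ∀ K, p ^ K ≤ w * p ^ (K + 1) := by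
      intro K
      have f2 : p ^ (K + 1) ≤ w * p ^ (K + 1) := Nat.le_mul_of_pos_left _ (by omega)
      have := hpKlt K
      omega
    have hg1 : ∀ K, 1 ≤ w * p ^ (K + 1) - p ^ K := by
      intro K
      have f2 : p ^ (K + 1) ≤ w * p ^ (K + 1) := Nat.le_mul_of_pos_left _ (by omega)
      have := hpKlt K
      omega
    have hL1 : ∀ K, 1 ≤ w * p ^ (K + 1) - p ^ K + w := by intro K; omega
    have hM1 : ∀ K, 1 ≤ w * p ^ (K + 1) + w := by intro K; omega
    -- CORE for the two approximating sequences
    have hcore1 : Tendsto (fun K =>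
        P ({ω | (0:ℝ) = X (w * p ^ (K + 1) - p ^ K + w) ω} \ {ω | (0:ℝ) = X w ω}) +
        P ({ω | (0:ℝ) = X w ω} \ {ω | (0:ℝ) = X (w * p ^ (K + 1) - p ^ K + w) ω}))
        atTop (𝓝 0) := by
      refine core P (fun _ => (0:ℝ)) (X w) (fun K ω => X (w * p ^ (K + 1) - p ^ K + w) ω)
        measurable_const (hXmeas w) (fun K => hXmeas _) (P {ω | X 1 ω = 0})
        (fun K => aprob' (hL1 K)) (aprob' hw) ?_
      refine diff_small P X p H hXmeas hp hH hss hsi hw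
        (fun K => w * p ^ (K + 1) - p ^ K + w) (fun K => w * p ^ (K + 1) - p ^ K)
        (fun K => rfl) hg1 ?_
      have hrw : (fun K => (padicNormNat p (w * p ^ (K + 1) - p ^ K)) ^ H) =
          (fun K => (padicNormNat p ((w * p - 1) * p ^ K)) ^ H) := by
        funext K
        congr 2
        rw [Nat.sub_mul, one_mul, pow_succ]
        congr 1
        ring
      rw [hrw]
      refine bf_small_general hp hH (g := fun K => (w * p - 1) * p ^ K) (e := fun K => K)
        (fun K => ⟨w * p - 1, ?_, rfl⟩) tendsto_id
      have : 2 ≤ w * p := le_trans hp.two_le (by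
        calc p = 1 * p := (one_mul p).symm
          _ ≤ w * p := Nat.mul_le_mul_right p hw)
      omega
    have hcore2 : Tendsto (fun K =>
        P ({ω | (0:ℝ) = X (w * p ^ (K + 1) + w) ω} \ {ω | (0:ℝ) = X w ω}) +
        P ({ω | (0:ℝ) = X w ω} \ {ω | (0:ℝ) = X (w * p ^ (K + 1) + w) ω}))
        atTop (𝓝 0) := by
      refine core P (fun _ => (0:ℝ)) (X w) (fun K ω => X (w * p ^ (K + 1) + w) ω)
        measurable_const (hXmeas w) (fun K => hXmeas _) (P {ω | X 1 ω = 0})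
        (fun K => aprob' (hM1 K)) (aprob' hw) ?_
      refine diff_small P X p H hXmeas hp hH hss hsi hw
        (fun K => w * p ^ (K + 1) + w) (fun K => w * p ^ (K + 1))
        (fun K => rfl) (fun K => by show 1 ≤ w * p ^ (K + 1); have := hple K; have := hpK1 K; omega) ?_
      have hrw : (fun K => (padicNormNat p (w * p ^ (K + 1))) ^ H) =
          (fun K => (padicNormNat p ((w * p) * p ^ K)) ^ H) := by
        funext K
        congr 2
        rw [pow_succ]
        ring
      rw [hrw]
      refine bf_small_general hp hH (g := fun K => (w * p) * p ^ K) (e := fun K => K)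
        (fun K => ⟨w * p, ?_, rfl⟩) tendsto_id
      have : 1 ≤ w * p := le_trans hw (Nat.le_mul_of_pos_right w hp.pos)
      omega
    constructor
    · -- the inequality at each K
      intro K
      have hsub : {ω | (0:ℝ) = X w ω} ⊆
          ({ω | (0:ℝ) = X (w * p ^ (K + 1) - p ^ K + w) ω} ∩
            {ω | (0:ℝ) = X (w * p ^ (K + 1) + w) ω}) ∪
          (({ω | (0:ℝ) = X w ω} \ {ω | (0:ℝ) = X (w * p ^ (K + 1) - p ^ K + w) ω}) ∪
           ({ω | (0:ℝ) = X w ω} \ {ω | (0:ℝ) = X (w * p ^ (K + 1) + w) ω})) := by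
        intro ω hω
        by_cases h1 : ω ∈ {ω | (0:ℝ) = X (w * p ^ (K + 1) - p ^ K + w) ω}
        · by_cases h2 : ω ∈ {ω | (0:ℝ) = X (w * p ^ (K + 1) + w) ω}
          · exact Or.inl ⟨h1, h2⟩
          · exact Or.inr (Or.inr ⟨hω, h2⟩)
        · exact Or.inr (Or.inl ⟨hω, h1⟩)
      have hinter : P ({ω | (0:ℝ) = X (w * p ^ (K + 1) - p ^ K + w) ω} ∩
          {ω | (0:ℝ) = X (w * p ^ (K + 1) + w) ω}) =
          P {ω | X (p ^ K) ω = 0 ∧ X (w * p ^ (K + 1) + w) ω = 0} := by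
        have hiset : {ω | (0:ℝ) = X (w * p ^ (K + 1) - p ^ K + w) ω} ∩
            {ω | (0:ℝ) = X (w * p ^ (K + 1) + w) ω} =
            {ω | X (w * p ^ (K + 1) - p ^ K + w) ω = 0 ∧
              X (w * p ^ (K + 1) + w) ω = 0} := by
          ext ω
          constructor
          · rintro ⟨h1, h2⟩; exact ⟨h1.symm, h2.symm⟩
          · rintro ⟨h1, h2⟩; exact ⟨h1.symm, h2.symm⟩
        rw [hiset]
        have hrefl := rho_reflect P X p H hXmeas hp hH hss hsi
          (a := p ^ K) (b := w * p ^ (K + 1) + w) (hpK1 K)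
          (by have := hple K; have := hpKlt K; omega)
        have hidx : w * p ^ (K + 1) + w - p ^ K = w * p ^ (K + 1) - p ^ K + w := by
          have := hple K
          omega
        rw [hidx] at hrefl
        exact hrefl.symm
      calc P {ω | (0:ℝ) = X w ω}
          ≤ P (({ω | (0:ℝ) = X (w * p ^ (K + 1) - p ^ K + w) ω} ∩
              {ω | (0:ℝ) = X (w * p ^ (K + 1) + w) ω})) +
            (P ({ω | (0:ℝ) = X w ω} \ {ω | (0:ℝ) = X (w * p ^ (K + 1) - p ^ K + w) ω}) +
             P ({ω | (0:ℝ) = X w ω} \ {ω | (0:ℝ) = X (w * p ^ (K + 1) + w) ω})) := by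
            refine le_trans (measure_mono hsub) ?_
            refine le_trans (measure_union_le _ _) ?_
            exact add_le_add le_rfl (measure_union_le _ _)
        _ = P {ω | X (p ^ K) ω = 0 ∧ X (w * p ^ (K + 1) + w) ω = 0} +
            (P ({ω | (0:ℝ) = X w ω} \ {ω | (0:ℝ) = X (w * p ^ (K + 1) - p ^ K + w) ω}) +
             P ({ω | (0:ℝ) = X w ω} \ {ω | (0:ℝ) = X (w * p ^ (K + 1) + w) ω})) := by
            rw [hinter]
    · -- error terms tend to zero
      have hsum := hcore1.add hcore2
      rw [add_zero] at hsum
      refine ennreal_squeeze_zero (fun K => ?_) hsum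
      exact add_le_add le_add_self le_add_self
  obtain ⟨hineqU, herrU⟩ := main u hu
  obtain ⟨hineqV, herrV⟩ := main v hv
  set q : ℝ≥0∞ := P {ω | X 1 ω = 0} with hqdef
  set eU : ℕ → ℝ≥0∞ := fun K =>
    (P ({ω | (0:ℝ) = X u ω} \ {ω | (0:ℝ) = X (u * p ^ (K + 1) - p ^ K + u) ω}) +
     P ({ω | (0:ℝ) = X u ω} \ {ω | (0:ℝ) = X (u * p ^ (K + 1) + u) ω})) with heU
  set eV : ℕ → ℝ≥0∞ := fun K =>
    (P ({ω | (0:ℝ) = X v ω} \ {ω | (0:ℝ) = X (v * p ^ (K + 1) - p ^ K + v) ω}) +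
     P ({ω | (0:ℝ) = X v ω} \ {ω | (0:ℝ) = X (v * p ^ (K + 1) + v) ω})) with heV
  have hKbound : ∀ K, q + q ≤
      (q + P {ω | X u ω = 0 ∧ X v ω = 0}) + (eU K + eV K) := by
    intro K
    have h1 := hineqU K
    have h2 := hineqV K
    rw [aprob' hu] at h1
    rw [aprob' hv] at h2
    have hsum := add_le_add h1 h2
    refine le_trans hsum ?_
    have h3 := rho_tri P X p H hXmeas hp hH hss
      (x := u * p ^ (K + 1) + u) (y := p ^ K) (z := v * p ^ (K + 1) + v) (hpK1 K)
    rw [rho_comm P X (u * p ^ (K + 1) + u) (p ^ K)] at h3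
    have hdil : P {ω | X (u * p ^ (K + 1) + u) ω = 0 ∧ X (v * p ^ (K + 1) + v) ω = 0} =
        P {ω | X u ω = 0 ∧ X v ω = 0} := by
      have hd := rho_dil P X p H hXmeas hp hH hss
        (a := 1 + p ^ (K + 1)) (by omega) u v
      have e1 : (1 + p ^ (K + 1)) * u = u * p ^ (K + 1) + u := by ring
      have e2 : (1 + p ^ (K + 1)) * v = v * p ^ (K + 1) + v := by ring
      rw [e1, e2] at hd
      exact hd
    rw [hdil] at h3
    calc (P {ω | X (p ^ K) ω = 0 ∧ X (u * p ^ (K + 1) + u) ω = 0} + eU K) +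
          (P {ω | X (p ^ K) ω = 0 ∧ X (v * p ^ (K + 1) + v) ω = 0} + eV K)
        = (P {ω | X (p ^ K) ω = 0 ∧ X (u * p ^ (K + 1) + u) ω = 0} +
            P {ω | X (p ^ K) ω = 0 ∧ X (v * p ^ (K + 1) + v) ω = 0}) + (eU K + eV K) := by
          ring
      _ ≤ (q + P {ω | X u ω = 0 ∧ X v ω = 0}) + (eU K + eV K) := add_le_add h3 le_rfl
  have hrhs : Tendsto (fun K => (q + P {ω | X u ω = 0 ∧ X v ω = 0}) + (eU K + eV K))
      atTop (𝓝 (q + P {ω | X u ω = 0 ∧ X v ω = 0})) := by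
    have h0 := herrU.add herrV
    rw [add_zero] at h0
    have := (tendsto_const_nhds
      (x := q + P {ω | X u ω = 0 ∧ X v ω = 0}) (f := atTop (α := ℕ))).add h0
    rw [add_zero] at this
    exact this
  have hfinal : q + q ≤ q + P {ω | X u ω = 0 ∧ X v ω = 0} :=
    ge_of_tendsto' hrhs hKbound
  exact (ENNReal.add_le_add_iff_left (measure_ne_top P _)).mp hfinal

end prob


/-- Proposition 2.6 (4): for a type-II dt-ss-si process and `m ≠ n`,
`P(Xₘ = Xₙ) = P(Xₘ = Xₙ = 0) = P(∀ i, Xᵢ = 0)`. -/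
theorem stmt10 {Ω : Type*} [MeasurableSpace Ω] (P : Measure Ω) [IsProbabilityMeasure P]
    (X : ℕ → Ω → ℝ) (hXmeas : ∀ n, Measurable (X n))
    (p : ℕ) (hp : p.Prime) (H : ℝ) (hH : 0 < H)
    (hss : SelfSimilar P X (fun n => (padicNormNat p n) ^ H))
    (hsi : StationaryIncrements P X) :
    ∀ m n : ℕ, m ≠ n →
      P {ω | X m ω = X n ω} = P {ω | X m ω = X n ω ∧ X m ω = 0} ∧
      P {ω | X m ω = X n ω ∧ X m ω = 0} = P {ω | ∀ i : ℕ, X i ω = 0} := by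
  intro m n hmn
  have hae := ae_X0 P X p H hXmeas hp hH hss
  have hfirst : P {ω | X m ω = X n ω} = P {ω | X 1 ω = 0} :=
    pairEq P X p H hXmeas hp hH hss hsi hmn
  have hsecond : P {ω | X m ω = X n ω ∧ X m ω = 0} = P {ω | X 1 ω = 0} := by
    rcases Nat.eq_zero_or_pos m with hm | hm
    · subst hm
      have hset : P {ω | X 0 ω = X n ω ∧ X 0 ω = 0} = P {ω | X n ω = 0} := by
        apply meas_congr_ae0 P X hae
        intro ω h0
        constructor
        · rintro ⟨h1, _⟩; exact (h1.symm.trans h0 : X n ω = 0)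
        · intro h1; exact ⟨h0.trans (h1 : X n ω = (0:ℝ)).symm, h0⟩
      rw [hset]
      exact aprob P X p H hXmeas hp hH hss (by omega)
    · rcases Nat.eq_zero_or_pos n with hn | hn
      · subst hn
        have hset : P {ω | X m ω = X 0 ω ∧ X m ω = 0} = P {ω | X m ω = 0} := by
          apply meas_congr_ae0 P X hae
          intro ω h0
          constructor
          · rintro ⟨_, h2⟩; exact h2
          · intro h1; exact ⟨(h1 : X m ω = (0:ℝ)).trans h0.symm, h1⟩
        rw [hset]
        exact aprob P X p H hXmeas hp hH hss hm
      · have hset : {ω | X m ω = X n ω ∧ X m ω = 0} = {ω | X m ω = 0 ∧ X n ω = 0} := by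
          ext ω
          constructor
          · rintro ⟨h1, h2⟩; exact ⟨h2, h1.symm.trans h2⟩
          · rintro ⟨h1, h2⟩; exact ⟨h1.trans h2.symm, h1⟩
        rw [hset]
        exact rho_eq_q P X p H hXmeas hp hH hss hsi hm hn hmn
  have hthird : P {ω | ∀ i : ℕ, X i ω = 0} = P {ω | X 1 ω = 0} := by
    have hZsub : {ω | ∀ i : ℕ, X i ω = 0} ⊆ {ω | X 1 ω = 0} := fun ω h => h 1
    refine le_antisymm (measure_mono hZsub) ?_
    have hdiff : P ({ω | X 1 ω = 0} \ {ω | ∀ i : ℕ, X i ω = 0}) = 0 := by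
      have hsub : {ω | X 1 ω = 0} \ {ω | ∀ i : ℕ, X i ω = 0} ⊆
          ⋃ i : ℕ, ({ω | X 1 ω = 0} \ {ω | X i ω = 0}) := by
        rintro ω ⟨h1, h2⟩
        simp only [Set.mem_setOf_eq, not_forall] at h2
        obtain ⟨i, hi⟩ := h2
        exact Set.mem_iUnion.mpr ⟨i, h1, hi⟩
      refine measure_mono_null hsub ?_
      rw [measure_iUnion_null_iff]
      intro i
      rcases Nat.eq_zero_or_pos i with hi | hi
      · subst hi
        exact measure_mono_null (fun ω hω => hω.2) (ae_iff.mp hae)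
      · by_cases hi1 : i = 1
        · subst hi1
          rw [Set.diff_self]
          exact measure_empty
        · have hρ := rho_eq_q P X p H hXmeas hp hH hss hsi (u := 1) (v := i)
            le_rfl hi (by omega)
          have hid := measure_inter_add_diff (μ := P) {ω | X 1 ω = 0}
            (measurableSet_eq_fun (hXmeas i) measurable_const :
              MeasurableSet {ω | X i ω = 0})
          rw [show ({ω | X 1 ω = 0} ∩ {ω | X i ω = 0}) =
            {ω | X 1 ω = 0 ∧ X i ω = 0} from rfl] at hid
          rw [hρ] at hid
          have hfin : P {ω | X 1 ω = 0} +
              P ({ω | X 1 ω = 0} \ {ω | X i ω = 0}) = P {ω | X 1 ω = 0} + 0 := by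
            rw [add_zero]; exact hid
          exact (ENNReal.add_right_inj (measure_ne_top P _)).mp hfin
    have hZmeas : MeasurableSet {ω | ∀ i : ℕ, X i ω = 0} := by
      have hzz : {ω | ∀ i : ℕ, X i ω = 0} = ⋂ i : ℕ, {ω | X i ω = 0} := by
        ext ω; simp [Set.mem_iInter]
      rw [hzz]
      exact MeasurableSet.iInter (fun i => measurableSet_eq_fun (hXmeas i) measurable_const)
    calc P {ω | X 1 ω = 0}
        = P ({ω | X 1 ω = 0} ∩ {ω | ∀ i, X i ω = 0}) +
          P ({ω | X 1 ω = 0} \ {ω | ∀ i, X i ω = 0}) :=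
          (measure_inter_add_diff _ hZmeas).symm
      _ = P ({ω | X 1 ω = 0} ∩ {ω | ∀ i, X i ω = 0}) := by rw [hdiff, add_zero]
      _ ≤ P {ω | ∀ i, X i ω = 0} := measure_mono Set.inter_subset_right
  exact ⟨hfirst.trans hsecond.symm, hsecond.trans hthird.symm⟩
end
end

section
/- Let p be a prime, H > 0, and let X = (X_n)_{n∈ℕ₀} be a dt-ss-si process with scaling function b(n) = (|n|_p)^H. Define a = sup{x ≥ 0 : P(|X₁| < x) = 0} and, in [0,∞], b = inf{x > 0 : P(|X₁| > x) = 0} (with b = ∞ if this set is empty). Then b ≥ (1 + 2·p^{−H})·a. -/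
open MeasureTheory ProbabilityTheory Filter Topology

noncomputable section

lemma lemC (a u c w A ym yp e₁ e₂ : ℝ)
    (ha : 0 < a) (hu1 : u ≤ 1) (hw0 : 0 < w) (hwu : w ≤ u)
    (hymc : A - c ≤ ym) (hypa : yp ≤ A - a)
    (hLo : ym ≤ e₁ - a) (hHi : e₁ + a ≤ yp)
    (h7 : e₁ ≤ A - u*a) (h8 : A - u*c ≤ e₁)
    (h9 : e₂ ≤ A - w*a) (h10 : A - w*c ≤ e₂)
    (h11 : u*a ≤ |e₁ - e₂|)
    (h14 : a ≤ |e₂ - ym|) (h15 : a ≤ |e₂ - yp|)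
    (hyd : yp - ym ≤ u*c) :
    (1 + 2*u)*a ≤ c := by
  have hac : a ≤ c := by nlinarith
  have hc0 : 0 < c := lt_of_lt_of_le ha hac
  have huc : u*c ≤ c := by nlinarith
  have hwc : w*c ≤ c := by nlinarith
  have hwa : 0 < w*a := mul_pos hw0 ha
  have hua : u*a ≤ a := by nlinarith
  rcases le_abs.mp h15 with hp | hp
  · linarith
  · rcases le_abs.mp h14 with hm | hm
    · have hb : |e₁ - e₂| ≤ yp - ym - 2*a := abs_le.mpr ⟨by linarith, by linarith⟩
      linarith
    · linarith

lemma lemA (a u c w A y₁ y₂ e₁ e₂ : ℝ)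
    (ha : 0 < a) (hu0 : 0 < u) (hu1 : u ≤ 1) (hw0 : 0 < w) (hwu : w ≤ u)
    (h1 : y₁ ≤ A - a) (h2 : y₂ ≤ A - a) (h3 : A - c ≤ y₁) (h4 : A - c ≤ y₂)
    (h5 : u*a ≤ |y₁ - y₂|) (h6 : |y₁ - y₂| ≤ u*c)
    (h7 : e₁ ≤ A - u*a) (h8 : A - u*c ≤ e₁)
    (h9 : e₂ ≤ A - w*a) (h10 : A - w*c ≤ e₂)
    (h11 : u*a ≤ |e₁ - e₂|)
    (h12 : a ≤ |e₁ - y₁|) (h13 : a ≤ |e₁ - y₂|)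
    (h14 : a ≤ |e₂ - y₁|) (h15 : a ≤ |e₂ - y₂|) :
    (1 + 2*u)*a ≤ c := by
  have hac : a ≤ c := by linarith
  have hc0 : 0 < c := lt_of_lt_of_le ha hac
  have huc : u*c ≤ c := by nlinarith
  have hua : u*a ≤ a := by nlinarith
  have h6' := abs_le.mp h6
  rcases le_abs.mp h12 with h12' | h12'
  · rcases le_abs.mp h13 with h13' | h13'
    · have hb : |y₁ - y₂| ≤ (e₁ - a) - (A - c) := abs_le.mpr ⟨by linarith, by linarith⟩
      linarith
    · exact lemC a u c w A y₁ y₂ e₁ e₂ ha hu1 hw0 hwu h3 h2 (by linarith) (by linarith)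
        h7 h8 h9 h10 h11 h14 h15 (by linarith [h6'.1])
  · rcases le_abs.mp h13 with h13' | h13'
    · exact lemC a u c w A y₂ y₁ e₁ e₂ ha hu1 hw0 hwu h4 h1 (by linarith) (by linarith)
        h7 h8 h9 h10 h11 h15 h14 (by linarith [h6'.2])
    · have hb : |y₁ - y₂| ≤ (A - a) - (e₁ + a) := abs_le.mpr ⟨by linarith, by linarith⟩
      linarith

lemma lemBcore (p : ℕ) (hp : p.Prime) (u a c : ℝ) (hu0 : 0 < u) (hu1 : u ≤ 1)
    (ha : 0 < a) (s : ℕ → ℝ)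
    (hs : ∀ m k : ℕ, 1 ≤ k →
      u ^ (padicValNat p k) * a ≤ |s (m + k) - s m| ∧
        |s (m + k) - s m| ≤ u ^ (padicValNat p k) * c)
    (N n₀ : ℕ) (R δ : ℝ) (hδ : 0 < δ) (hδa : 4*δ < u^2*a)
    (hb : ∀ n, N ≤ n → |s n| ≤ R) (hn₀ : N ≤ n₀) (hA : R - 2*δ < s n₀) :
    (1 + 2*u)*a ≤ c := by
  haveI : Fact p.Prime := ⟨hp⟩
  have hp2 : 2 ≤ p := hp.two_le
  have hple : ∀ n : ℕ, p ∣ n → n ≠ 0 → p ≤ n := fun n h h0 => Nat.le_of_dvd (Nat.pos_of_ne_zero h0) h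
  -- valuation facts
  have hv1 : padicValNat p 1 = 0 := padicValNat.one
  have hv1p : padicValNat p (1+p) = 0 := by
    apply padicValNat.eq_zero_of_not_dvd
    intro h
    rw [add_comm] at h
    have h1 : p ∣ 1 := (Nat.dvd_add_right (dvd_refl p)).mp h
    have := Nat.le_of_dvd one_pos h1
    omega
  have hvp : padicValNat p p = 1 := padicValNat.self hp.one_lt
  have hvpm1 : padicValNat p (p-1) = 0 := by
    apply padicValNat.eq_zero_of_not_dvd
    intro h
    have := hple _ h (by omega)
    omega
  have hv2pm1 : padicValNat p (2*p-1) = 0 := by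
    apply padicValNat.eq_zero_of_not_dvd
    intro h
    have h2 : p ∣ 2*p := dvd_mul_left p 2
    have h3 := Nat.dvd_sub h2 h
    rw [show 2*p - (2*p-1) = 1 from by omega] at h3
    have := Nat.le_of_dvd one_pos h3
    omega
  have hv2p : 1 ≤ padicValNat p (2*p) ∧ padicValNat p (2*p) ≤ 2 := by
    rw [padicValNat.mul (by omega) (by omega), hvp]
    rcases eq_or_ne p 2 with rfl | hne
    · norm_num [padicValNat.self]
    · have : padicValNat p 2 = 0 := by
        apply padicValNat.eq_zero_of_not_dvd
        intro h
        have := hple _ h (by omega)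
        omega
      omega
  -- the five points
  set A := s n₀ with hAdef
  set y₁ := s (n₀+1) with hy₁def
  set y₂ := s (n₀+(1+p)) with hy₂def
  set e₁ := s (n₀+p) with he₁def
  set e₂ := s (n₀+2*p) with he₂def
  set w : ℝ := u ^ (padicValNat p (2*p)) with hwdef
  have hw0 : 0 < w := pow_pos hu0 _
  have hwu : w ≤ u := by
    rw [hwdef]
    calc u ^ padicValNat p (2*p) ≤ u ^ 1 := pow_le_pow_of_le_one hu0.le hu1 hv2p.1
    _ = u := pow_one u
  have hw2 : u^2 ≤ w := pow_le_pow_of_le_one hu0.le hu1 hv2p.2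
  have hu2a : u^2*a ≤ a := by nlinarith
  have hu2ua : u^2*a ≤ u*a := by nlinarith
  have hu2wa : u^2*a ≤ w*a := by nlinarith
  -- constraints
  have c1 := hs n₀ 1 le_rfl
  rw [hv1, pow_zero, one_mul] at c1
  have c2 := hs n₀ (1+p) (by omega)
  rw [hv1p, pow_zero, one_mul] at c2
  have c3 := hs n₀ p (by omega)
  rw [hvp, pow_one] at c3
  have c4 := hs n₀ (2*p) (by omega)
  have c5 := hs (n₀+1) p (by omega)
  rw [show n₀+1+p = n₀+(1+p) from by omega, hvp, pow_one] at c5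
  have c6 := hs (n₀+p) p (by omega)
  rw [show n₀+p+p = n₀+2*p from by omega, hvp, pow_one] at c6
  have c7 := hs (n₀+1) (p-1) (by omega)
  rw [show n₀+1+(p-1) = n₀+p from by omega, hvpm1, pow_zero, one_mul] at c7
  have c8 := hs (n₀+p) 1 le_rfl
  rw [show n₀+p+1 = n₀+(1+p) from by omega, hv1, pow_zero, one_mul] at c8
  have c9 := hs (n₀+1) (2*p-1) (by omega)
  rw [show n₀+1+(2*p-1) = n₀+2*p from by omega, hv2pm1, pow_zero, one_mul] at c9
  have c10 := hs (n₀+(1+p)) (p-1) (by omega)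
  rw [show n₀+(1+p)+(p-1) = n₀+2*p from by omega, hvpm1, pow_zero, one_mul] at c10
  -- "up impossible" helper
  have hdrop : ∀ (z γ : ℝ), γ*a ≤ |z - A| → z ≤ R → u^2*a ≤ γ*a → z ≤ A - γ*a := by
    intro z γ hl hz hγ
    rcases le_abs.mp hl with h | h
    · exfalso; linarith
    · linarith
  have hzR : ∀ n, N ≤ n → s n ≤ R := fun n hn => (le_abs_self _).trans (hb n hn)
  have h1 : y₁ ≤ A - a := by
    have := hdrop y₁ 1 (by rw [one_mul]; exact c1.1) (hzR _ (by omega)) (by linarith)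
    linarith
  have h2 : y₂ ≤ A - a := by
    have := hdrop y₂ 1 (by rw [one_mul]; exact c2.1) (hzR _ (by omega)) (by linarith)
    linarith
  have h7 : e₁ ≤ A - u*a := hdrop e₁ u c3.1 (hzR _ (by omega)) hu2ua
  have h9 : e₂ ≤ A - w*a := hdrop e₂ w c4.1 (hzR _ (by omega)) hu2wa
  have h3 : A - c ≤ y₁ := by have := (abs_le.mp c1.2).1; linarith
  have h4 : A - c ≤ y₂ := by have := (abs_le.mp c2.2).1; linarith
  have h8 : A - u*c ≤ e₁ := by have := (abs_le.mp c3.2).1; linarith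
  have h10 : A - w*c ≤ e₂ := by have := (abs_le.mp c4.2).1; linarith
  have h5 : u*a ≤ |y₁ - y₂| := by
    first | exact c5.1 | (rw [abs_sub_comm]; exact c5.1)
  have h6 : |y₁ - y₂| ≤ u*c := by
    first | exact c5.2 | (rw [abs_sub_comm]; exact c5.2)
  have h11 : u*a ≤ |e₁ - e₂| := by
    first | exact c6.1 | (rw [abs_sub_comm]; exact c6.1)
  have h12 : a ≤ |e₁ - y₁| := by
    first | exact c7.1 | (rw [abs_sub_comm]; exact c7.1)
  have h13 : a ≤ |e₁ - y₂| := by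
    first | exact c8.1 | (rw [abs_sub_comm]; exact c8.1)
  have h14 : a ≤ |e₂ - y₁| := by
    first | exact c9.1 | (rw [abs_sub_comm]; exact c9.1)
  have h15 : a ≤ |e₂ - y₂| := by
    first | exact c10.1 | (rw [abs_sub_comm]; exact c10.1)
  exact lemA a u c w A y₁ y₂ e₁ e₂ ha hu0 hu1 hw0 hwu h1 h2 h3 h4
    h5 h6 h7 h8 h9 h10 h11 h12 h13 h14 h15

lemma lemB (p : ℕ) (hp : p.Prime) (u a c : ℝ) (hu0 : 0 < u) (hu1 : u ≤ 1)
    (ha : 0 < a) (hc : 0 < c) (s : ℕ → ℝ)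
    (hs : ∀ m k : ℕ, 1 ≤ k →
      u ^ (padicValNat p k) * a ≤ |s (m + k) - s m| ∧
        |s (m + k) - s m| ≤ u ^ (padicValNat p k) * c) :
    (1 + 2*u)*a ≤ c := by
  have hbound : ∀ n, |s n| ≤ |s 0| + c := by
    intro n
    rcases Nat.eq_zero_or_pos n with rfl | hn
    · linarith [abs_nonneg (s 0)]
    · have h := (hs 0 n hn).2
      rw [zero_add] at h
      have hle1 : u ^ (padicValNat p n) * c ≤ c := by
        have := pow_le_one₀ hu0.le hu1 (n := padicValNat p n)
        nlinarith
      have htri : |s n| ≤ |s n - s 0| + |s 0| := by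
        have := abs_add_le (s n - s 0) (s 0)
        simpa using this
      linarith
  have hbddU : IsBoundedUnder (· ≤ ·) atTop (fun n => |s n|) :=
    isBoundedUnder_of ⟨|s 0| + c, fun n => hbound n⟩
  have hcob : IsCoboundedUnder (· ≤ ·) atTop (fun n => |s n|) :=
    (isBoundedUnder_of ⟨0, fun n => abs_nonneg (s n)⟩ :
      IsBoundedUnder (· ≥ ·) atTop (fun n => |s n|)).isCoboundedUnder_le
  set T := limsup (fun n => |s n|) atTop with hT
  set δ : ℝ := u^2*a/8 with hδdef
  have hδ0 : 0 < δ := by positivity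
  have hδa : 4*δ < u^2*a := by rw [hδdef]; nlinarith [mul_pos (mul_pos hu0 hu0) ha, sq_nonneg u]
  have hev : ∀ᶠ n in atTop, |s n| < T + δ :=
    eventually_lt_of_limsup_lt (by linarith) hbddU
  obtain ⟨N, hN⟩ := eventually_atTop.mp hev
  have hfr : ∃ᶠ n in atTop, T - δ < |s n| :=
    frequently_lt_of_lt_limsup hcob (by linarith)
  obtain ⟨n₀, hn₀N, hn₀⟩ := frequently_atTop.mp hfr N
  have hb : ∀ n, N ≤ n → |s n| ≤ T + δ := fun n hn => (hN n hn).le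
  rcases le_or_gt 0 (s n₀) with hsgn | hsgn
  · exact lemBcore p hp u a c hu0 hu1 ha s hs N n₀ (T + δ) δ hδ0 hδa hb hn₀N
      (by rw [abs_of_nonneg hsgn] at hn₀; linarith)
  · have hs' : ∀ m k : ℕ, 1 ≤ k →
        u ^ (padicValNat p k) * a ≤ |(fun n => -(s n)) (m + k) - (fun n => -(s n)) m| ∧
          |(fun n => -(s n)) (m + k) - (fun n => -(s n)) m| ≤ u ^ (padicValNat p k) * c := by
      intro m k hk
      have := hs m k hk
      simpa [abs_sub_comm, neg_sub, sub_neg_eq_add, show ∀ x y : ℝ, -x - -y = y - x from fun x y => by ring] using this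
    exact lemBcore p hp u a c hu0 hu1 ha (fun n => -(s n)) hs' N n₀ (T + δ) δ hδ0 hδa
      (fun n hn => by simpa using hb n hn) hn₀N
      (by rw [abs_of_neg hsgn] at hn₀; simpa using by linarith : T + δ - 2*δ < -(s n₀))

lemma bval (p : ℕ) (hp : p.Prime) (H : ℝ) (k : ℕ) (hk : k ≠ 0) :
    (padicNormNat p k) ^ H = (((p:ℝ) ^ H)⁻¹) ^ (padicValNat p k) := by
  have hp0 : (0:ℝ) < p := by exact_mod_cast hp.pos
  have h1 : padicNormNat p k = ((p:ℝ) ^ (padicValNat p k : ℕ))⁻¹ := by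
    unfold padicNormNat
    rw [padicNorm.eq_zpow_of_nonzero (by exact_mod_cast hk)]
    push_cast
    rw [padicValRat.of_nat, zpow_neg, zpow_natCast]
  rw [h1, Real.inv_rpow (by positivity), ← Real.rpow_natCast (p:ℝ) (padicValNat p k),
    ← Real.rpow_mul hp0.le, mul_comm, Real.rpow_mul hp0.le, Real.rpow_natCast, inv_pow]

lemma eqdist_comp {Ω : Type*} [MeasurableSpace Ω] (P : Measure Ω) (F G : ℕ → Ω → ℝ)
    (hF : ∀ i, Measurable (F i)) (hG : ∀ i, Measurable (G i))
    (h : EqDistFam P P F G) (φ : (ℕ → ℝ) → ℝ) (hφ : Measurable φ) :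
    Measure.map (fun ω => φ (fun i => F i ω)) P
      = Measure.map (fun ω => φ (fun i => G i ω)) P := by
  have h' : Measure.map (fun ω i => F i ω) P = Measure.map (fun ω i => G i ω) P := h
  have hF' : Measurable (fun ω i => F i ω) := measurable_pi_lambda _ hF
  have hG' : Measurable (fun ω i => G i ω) := measurable_pi_lambda _ hG
  calc Measure.map (fun ω => φ (fun i => F i ω)) P
      = Measure.map φ (Measure.map (fun ω i => F i ω) P) := (Measure.map_map hφ hF').symm
    _ = Measure.map φ (Measure.map (fun ω i => G i ω) P) := by rw [h']
    _ = _ := Measure.map_map hφ hG'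

lemma goodlaw {Ω : Type*} [MeasurableSpace Ω] (P : Measure Ω) [IsProbabilityMeasure P]
    (X : ℕ → Ω → ℝ) (hXmeas : ∀ n, Measurable (X n))
    (b : ℕ → ℝ) (hb1 : 0 < b 1) (hbp : ∃ n₁, 1 ≤ n₁ ∧ 0 < b n₁ ∧ b n₁ < 1)
    (hss : SelfSimilar P X b) (hsi : StationaryIncrements P X)
    (m k : ℕ) (hk : 1 ≤ k) :
    Measure.map (fun ω => X (m + k) ω - X m ω) P
      = Measure.map (fun ω => b k * X 1 ω) P := by
  obtain ⟨n₁, hn₁, hb0pos, hb0lt1⟩ := hbp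
  set b0 := b n₁ with hb0def
  -- Step 1: law of X 0 is invariant under scaling by b0
  have hX0law : Measure.map (X 0) P = Measure.map (fun ω => b0 * X 0 ω) P := by
    have h := eqdist_comp P _ _ (fun i => hXmeas _) (fun i => (hXmeas i).const_mul _)
      (hss n₁ hn₁) (fun f => f 0) (measurable_pi_apply 0)
    simpa using h
  -- Step 2: X 0 = 0 a.e.
  have hstep : ∀ t : ℝ, 0 < t → P {ω | t < |X 0 ω|} = P {ω | t / b0 < |X 0 ω|} := by
    intro t ht
    have hS : MeasurableSet {y : ℝ | t < |y|} := measurableSet_lt measurable_const measurable_abs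
    have e1 : P {ω | t < |X 0 ω|} = Measure.map (X 0) P {y | t < |y|} := by
      rw [Measure.map_apply (hXmeas 0) hS]; rfl
    have e2 : Measure.map (fun ω => b0 * X 0 ω) P {y | t < |y|} = P {ω | t / b0 < |X 0 ω|} := by
      rw [Measure.map_apply ((hXmeas 0).const_mul b0) hS]
      congr 1
      ext ω
      simp only [Set.mem_preimage, Set.mem_setOf_eq, abs_mul, abs_of_pos hb0pos]
      rw [div_lt_iff₀ hb0pos, mul_comm]
    rw [e1, hX0law, e2]
  have hiter : ∀ (n : ℕ) (t : ℝ), 0 < t →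
      P {ω | t < |X 0 ω|} = P {ω | t / b0 ^ n < |X 0 ω|} := by
    intro n
    induction n with
    | zero => intro t _; rw [pow_zero, div_one]
    | succ n ih =>
      intro t ht
      rw [hstep t ht, ih (t / b0) (by positivity),
        show t / b0 / b0 ^ n = t / b0 ^ (n + 1) from by rw [div_div, ← pow_succ']]
  have hlim : ∀ t : ℝ, 0 < t → P {ω | t < |X 0 ω|} = 0 := by
    intro t ht
    set Sn := fun n : ℕ => {ω | t / b0 ^ n < |X 0 ω|} with hSn
    have hmeas : ∀ n, MeasurableSet (Sn n) :=
      fun n => measurableSet_lt measurable_const (hXmeas 0).abs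
    have hanti : Antitone Sn := by
      intro n m hnm ω hω
      simp only [hSn, Set.mem_setOf_eq] at hω ⊢
      have hle : b0 ^ m ≤ b0 ^ n := pow_le_pow_of_le_one hb0pos.le hb0lt1.le hnm
      have : t / b0 ^ n ≤ t / b0 ^ m := by
        apply div_le_div_of_nonneg_left ht.le (pow_pos hb0pos m) hle
      linarith
    have hempty : ⋂ n, Sn n = ∅ := by
      ext ω
      simp only [Set.mem_iInter, hSn, Set.mem_setOf_eq, Set.mem_empty_iff_false, iff_false,
        not_forall, not_lt]
      obtain ⟨n, hn⟩ := exists_pow_lt_of_lt_one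
        (show (0:ℝ) < t / (|X 0 ω| + 1) by positivity) hb0lt1
      refine ⟨n, ?_⟩
      have hbn : (0:ℝ) < b0 ^ n := pow_pos hb0pos n
      have h2 : b0 ^ n * (|X 0 ω| + 1) < t :=
        (lt_div_iff₀ (by positivity)).mp hn
      rw [le_div_iff₀ hbn]
      nlinarith [abs_nonneg (X 0 ω)]
    have htend := tendsto_measure_iInter_atTop (μ := P)
      (fun n => (hmeas n).nullMeasurableSet) hanti ⟨0, measure_ne_top P _⟩
    rw [hempty, measure_empty] at htend
    have h2 : Tendsto (fun _ : ℕ => P {ω | t < |X 0 ω|}) atTop (𝓝 0) := by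
      have : (fun _ : ℕ => P {ω | t < |X 0 ω|}) = fun n => P (Sn n) :=
        funext fun n => hiter n t ht
      rw [this]; exact htend
    exact (tendsto_nhds_unique h2 tendsto_const_nhds).symm
  have hX0zero : ∀ᵐ ω ∂P, X 0 ω = 0 := by
    rw [MeasureTheory.ae_iff]
    have hsub : {ω | ¬X 0 ω = 0} ⊆ ⋃ n : ℕ, {ω | 1 / ((n:ℝ) + 1) < |X 0 ω|} := by
      intro ω hω
      simp only [Set.mem_setOf_eq] at hω
      obtain ⟨n, hn⟩ := exists_nat_one_div_lt (abs_pos.mpr hω)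
      exact Set.mem_iUnion.mpr ⟨n, hn⟩
    exact measure_mono_null hsub (measure_iUnion_null fun n => hlim _ (by positivity))
  -- Step 3: increments
  have hincr : Measure.map (fun ω => X (m + k) ω - X m ω) P
      = Measure.map (fun ω => X k ω - X 0 ω) P := by
    rcases Nat.eq_zero_or_pos m with rfl | hm
    · simp only [Nat.zero_add]
    · have h := eqdist_comp P _ _
        (fun i => (hXmeas (i+1)).sub (hXmeas i))
        (fun i => (hXmeas (i+m+1)).sub (hXmeas (i+m)))
        (hsi m hm) (fun f => ∑ j ∈ Finset.range k, f j)
        (Finset.measurable_sum _ (fun j _ => measurable_pi_apply j))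
      have e1 : (fun ω => ∑ j ∈ Finset.range k,
          ((fun i => X (i + 1) ω - X i ω) j)) = fun ω => X k ω - X 0 ω := by
        funext ω
        exact Finset.sum_range_sub (fun j => X j ω) k
      have e2 : (fun ω => ∑ j ∈ Finset.range k,
          ((fun i => X (i + m + 1) ω - X (i + m) ω) j)) = fun ω => X (m + k) ω - X m ω := by
        funext ω
        have h3 := Finset.sum_range_sub (fun j => X (j + m) ω) k
        calc ∑ j ∈ Finset.range k, (X (j + m + 1) ω - X (j + m) ω)
            = ∑ j ∈ Finset.range k, (X (j + 1 + m) ω - X (j + m) ω) := by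
              apply Finset.sum_congr rfl
              intro j _
              rw [show j + m + 1 = j + 1 + m from by omega]
          _ = X (k + m) ω - X (0 + m) ω := h3
          _ = X (m + k) ω - X m ω := by rw [Nat.add_comm k m, Nat.zero_add]
      simp only [Pi.sub_apply] at h e1 e2
      rw [e1, e2] at h
      exact h.symm
  -- Step 4: scaling
  have hscal : Measure.map (fun ω => X k ω - X 0 ω) P
      = Measure.map (fun ω => b k * X 1 ω - b k * X 0 ω) P := by
    have h := eqdist_comp P _ _ (fun i => hXmeas _) (fun i => (hXmeas i).const_mul _)
      (hss k hk) (fun f => f 1 - f 0)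
      ((measurable_pi_apply 1).sub (measurable_pi_apply 0))
    simpa using h
  have hfinal : Measure.map (fun ω => b k * X 1 ω - b k * X 0 ω) P
      = Measure.map (fun ω => b k * X 1 ω) P := by
    apply Measure.map_congr
    filter_upwards [hX0zero] with ω h
    rw [h, mul_zero, sub_zero]
  rw [hincr, hscal, hfinal]

/-- Proposition 2.6 (6): with `a` the essential lower bound and `B` the essential upper
bound (in `ℝ≥0∞`) of `|X 1|`, one has `B ≥ (1 + 2 p^{-H}) a`. -/
theorem stmt12 {Ω : Type*} [MeasurableSpace Ω] (P : Measure Ω) [IsProbabilityMeasure P]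
    (X : ℕ → Ω → ℝ) (hXmeas : ∀ n, Measurable (X n))
    (p : ℕ) (hp : p.Prime) (H : ℝ) (hH : 0 < H)
    (hss : SelfSimilar P X (fun n => (padicNormNat p n) ^ H))
    (hsi : StationaryIncrements P X)
    (a : ℝ) (ha : a = sSup {x : ℝ | 0 ≤ x ∧ P {ω | |X 1 ω| < x} = 0})
    (B : ENNReal)
    (hB : B = sInf ((fun x : ℝ => ENNReal.ofReal x) ''
      {x : ℝ | 0 < x ∧ P {ω | x < |X 1 ω|} = 0})) :
    ENNReal.ofReal ((1 + 2 * (p : ℝ) ^ (-H)) * a) ≤ B := by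
  have hp0 : (0:ℝ) < p := by exact_mod_cast hp.pos
  have hpH1 : 1 < (p:ℝ) ^ H :=
    (Real.one_lt_rpow_iff_of_pos hp0).mpr (Or.inl ⟨by exact_mod_cast hp.one_lt, hH⟩)
  set u : ℝ := ((p:ℝ) ^ H)⁻¹ with hudef
  have hu0 : 0 < u := by positivity
  have hu1 : u < 1 := inv_lt_one_of_one_lt₀ hpH1
  have hneg : (p:ℝ) ^ (-H) = u := by rw [hudef, Real.rpow_neg hp0.le]
  rw [hB]
  apply le_sInf
  rintro b ⟨x, ⟨hx0, hxnull⟩, rfl⟩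
  apply ENNReal.ofReal_le_ofReal
  rw [hneg]
  by_cases hale : a ≤ 0
  · nlinarith
  push_neg at hale
  -- lower bound is a.s.
  have halow : P {ω | |X 1 ω| < a} = 0 := by
    have hmem : ∀ t : ℝ, t < a → P {ω | |X 1 ω| < t} = 0 := by
      intro t ht
      have hne : Set.Nonempty {x : ℝ | 0 ≤ x ∧ P {ω | |X 1 ω| < x} = 0} := by
        refine ⟨0, le_rfl, ?_⟩
        have : {ω | |X 1 ω| < 0} = ∅ := by
          ext ω; simp [(abs_nonneg (X 1 ω)).not_gt]
        rw [this, measure_empty]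
      obtain ⟨y, ⟨hy0, hynull⟩, hty⟩ := exists_lt_of_lt_csSup hne (ha ▸ ht)
      exact measure_mono_null (fun ω hω => lt_trans hω hty) hynull
    have hsub : {ω | |X 1 ω| < a} ⊆ ⋃ n : ℕ, {ω | |X 1 ω| < a - 1 / ((n:ℝ) + 1)} := by
      intro ω hω
      simp only [Set.mem_setOf_eq] at hω
      obtain ⟨n, hn⟩ := exists_nat_one_div_lt (show (0:ℝ) < a - |X 1 ω| by linarith)
      exact Set.mem_iUnion.mpr ⟨n, by simp only [Set.mem_setOf_eq]; linarith⟩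
    exact measure_mono_null hsub
      (measure_iUnion_null fun n => hmem _ (by
        have : (0:ℝ) < 1 / ((n:ℝ) + 1) := by positivity
        linarith))
  -- scaling function facts
  set b : ℕ → ℝ := fun n => (padicNormNat p n) ^ H with hbdef
  have hbval : ∀ k : ℕ, 1 ≤ k → b k = u ^ (padicValNat p k) := by
    intro k hk
    rw [hbdef]
    exact bval p hp H k (by omega)
  have hbpos : ∀ k : ℕ, 1 ≤ k → 0 < b k := by
    intro k hk; rw [hbval k hk]; positivity
  -- laws of increments
  have hlaw := goodlaw P X hXmeas b (hbpos 1 le_rfl)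
    ⟨p, hp.one_le, hbpos p hp.one_le, by
      rw [hbval p hp.one_le, padicValNat.self hp.one_lt, pow_one]; exact hu1⟩
    hss hsi
  -- null sets for each pair
  have hnull : ∀ m k : ℕ, 1 ≤ k →
      P ({ω | |X (m + k) ω - X m ω| < b k * a} ∪
         {ω | b k * x < |X (m + k) ω - X m ω|}) = 0 := by
    intro m k hk
    have hbk := hbpos k hk
    have hD : Measurable (fun ω => X (m + k) ω - X m ω) := (hXmeas (m+k)).sub (hXmeas m)
    have hS1 : MeasurableSet {y : ℝ | |y| < b k * a} :=
      measurableSet_lt measurable_abs measurable_const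
    have hS2 : MeasurableSet {y : ℝ | b k * x < |y|} :=
      measurableSet_lt measurable_const measurable_abs
    apply measure_union_null
    · have e1 : P {ω | |X (m + k) ω - X m ω| < b k * a}
          = Measure.map (fun ω => X (m + k) ω - X m ω) P {y | |y| < b k * a} := by
        rw [Measure.map_apply hD hS1]; rfl
      rw [e1, hlaw m k hk, Measure.map_apply ((hXmeas 1).const_mul _) hS1]
      have e2 : (fun ω => b k * X 1 ω) ⁻¹' {y | |y| < b k * a} = {ω | |X 1 ω| < a} := by
        ext ω
        simp only [Set.mem_preimage, Set.mem_setOf_eq, abs_mul, abs_of_pos hbk]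
        exact mul_lt_mul_iff_right₀ hbk
      rw [e2, halow]
    · have e1 : P {ω | b k * x < |X (m + k) ω - X m ω|}
          = Measure.map (fun ω => X (m + k) ω - X m ω) P {y | b k * x < |y|} := by
        rw [Measure.map_apply hD hS2]; rfl
      rw [e1, hlaw m k hk, Measure.map_apply ((hXmeas 1).const_mul _) hS2]
      have e2 : (fun ω => b k * X 1 ω) ⁻¹' {y | b k * x < |y|} = {ω | x < |X 1 ω|} := by
        ext ω
        simp only [Set.mem_preimage, Set.mem_setOf_eq, abs_mul, abs_of_pos hbk]
        exact mul_lt_mul_iff_right₀ hbk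
      rw [e2, hxnull]
  -- a good sample path
  set Bad : Set Ω := ⋃ m : ℕ, ⋃ k : ℕ,
      ({ω | |X (m + (k+1)) ω - X m ω| < b (k+1) * a} ∪
       {ω | b (k+1) * x < |X (m + (k+1)) ω - X m ω|}) with hBadDef
  have hBadNull : P Bad = 0 :=
    measure_iUnion_null fun m => measure_iUnion_null fun k => hnull m (k+1) (by omega)
  have hBadNe : Badᶜ.Nonempty := by
    rw [Set.nonempty_iff_ne_empty]
    intro hcon
    have : Bad = Set.univ := by
      rw [← Set.compl_empty, ← hcon, compl_compl]
    rw [this] at hBadNull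
    simp [measure_univ] at hBadNull
  obtain ⟨ω, hω⟩ := hBadNe
  have hωc : ∀ m k : ℕ, ¬(|X (m + (k+1)) ω - X m ω| < b (k+1) * a) ∧
      ¬(b (k+1) * x < |X (m + (k+1)) ω - X m ω|) := by
    intro m k
    have h1 : ω ∉ Bad := hω
    rw [hBadDef] at h1
    simp only [Set.mem_iUnion, Set.mem_union, Set.mem_setOf_eq, not_exists, not_or] at h1
    exact h1 m k
  -- the sequence constraints
  have hs : ∀ m k : ℕ, 1 ≤ k →
      u ^ (padicValNat p k) * a ≤ |X (m + k) ω - X m ω| ∧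
        |X (m + k) ω - X m ω| ≤ u ^ (padicValNat p k) * x := by
    intro m k hk
    obtain ⟨k', rfl⟩ : ∃ k', k = k' + 1 := ⟨k - 1, by omega⟩
    have h := hωc m k'
    rw [hbval (k'+1) (by omega)] at h
    exact ⟨not_lt.mp h.1, not_lt.mp h.2⟩
  exact lemB p hp u a x hu0 hu1.le hale hx0 (fun n => X n ω) hs
end
end

section
/- Let p be a prime, H > 0, and let X = (X_n)_{n∈ℕ₀} be a dt-ss-si process with scaling function b(n) = (|n|_p)^H such that E(X₁²) < ∞. Then for all m, n ∈ ℕ₀, Cov(X_n, X_m) = ½·((|n|_p)^{2H} + (|m|_p)^{2H} − (|n−m|_p)^{2H})·Var(X₁), where |0|_p = 0 and |−k|_p = |k|_p for integers k. -/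
open MeasureTheory ProbabilityTheory Filter

noncomputable section

/-- The covariance of two real random variables. -/
def cov {Ω : Type*} [MeasurableSpace Ω] (P : Measure Ω) (Y Z : Ω → ℝ) : ℝ :=
  ∫ ω, (Y ω - ∫ x, Y x ∂P) * (Z ω - ∫ x, Z x ∂P) ∂P

/-- The `p`-adic norm of the difference of two natural numbers, as a real number. -/
def padicNormSub (p m n : ℕ) : ℝ := ((padicNorm p ((m : ℚ) - (n : ℚ)) : ℚ) : ℝ)


section Aux

open MeasureTheory

variable {Ω : Type*} [MeasurableSpace Ω] {P : Measure Ω}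

lemma map_eq_of_eqDistFam {X Y : ℕ → Ω → ℝ} (hX : ∀ i, Measurable (X i))
    (hY : ∀ i, Measurable (Y i)) (h : EqDistFam P P X Y) {F : (ℕ → ℝ) → ℝ}
    (hF : Measurable F) :
    Measure.map (fun ω => F (fun i => X i ω)) P
      = Measure.map (fun ω => F (fun i => Y i ω)) P := by
  have h1 : Measurable (fun ω i => X i ω) := measurable_pi_lambda _ hX
  have h2 : Measurable (fun ω i => Y i ω) := measurable_pi_lambda _ hY
  have e1 : (fun ω => F (fun i => X i ω)) = F ∘ (fun ω i => X i ω) := rfl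
  have e2 : (fun ω => F (fun i => Y i ω)) = F ∘ (fun ω i => Y i ω) := rfl
  rw [e1, e2, ← Measure.map_map hF h1, ← Measure.map_map hF h2, h]

lemma memLp2_of_map_eq {f g : Ω → ℝ} (hf : Measurable f) (hg : Measurable g)
    (h : Measure.map f P = Measure.map g P) (hfL : MemLp f 2 P) : MemLp g 2 P := by
  have h1 : MemLp (id : ℝ → ℝ) 2 (Measure.map f P) := by
    rw [memLp_map_measure_iff aestronglyMeasurable_id hf.aemeasurable]
    exact hfL
  rw [h, memLp_map_measure_iff aestronglyMeasurable_id hg.aemeasurable] at h1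
  exact h1

lemma integral_comp_eq_of_map_eq {f g : Ω → ℝ} (hf : Measurable f) (hg : Measurable g)
    (h : Measure.map f P = Measure.map g P) {φ : ℝ → ℝ} (hφ : Measurable φ) :
    ∫ ω, φ (f ω) ∂P = ∫ ω, φ (g ω) ∂P := by
  rw [← integral_map hf.aemeasurable hφ.aestronglyMeasurable, h,
      integral_map hg.aemeasurable hφ.aestronglyMeasurable]

end Aux

/-- Proposition 2.6 (7): the covariance function of a square-integrable type-II
dt-ss-si process. -/
theorem stmt13 {Ω : Type*} [MeasurableSpace Ω] (P : Measure Ω) [IsProbabilityMeasure P]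
    (X : ℕ → Ω → ℝ) (hXmeas : ∀ n, Measurable (X n))
    (p : ℕ) (hp : p.Prime) (H : ℝ) (hH : 0 < H)
    (hss : SelfSimilar P X (fun n => (padicNormNat p n) ^ H))
    (hsi : StationaryIncrements P X)
    (hL2 : Integrable (fun ω => (X 1 ω) ^ 2) P) :
    ∀ m n : ℕ, cov P (X n) (X m) =
      (1 / 2) * ((padicNormNat p n) ^ (2 * H) + (padicNormNat p m) ^ (2 * H)
        - (padicNormSub p n m) ^ (2 * H)) * cov P (X 1) (X 1) := by
  haveI : Fact p.Prime := ⟨hp⟩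
  have hsq : Measurable (fun x : ℝ => x ^ 2) := measurable_id.pow_const 2
  -- basic facts about the p-adic norm
  have hc0 : padicNormNat p 0 = 0 := by simp [padicNormNat]
  have hcnn : ∀ k : ℕ, 0 ≤ padicNormNat p k := fun k => by
    unfold padicNormNat; exact_mod_cast padicNorm.nonneg _
  have hcpos : ∀ k : ℕ, 1 ≤ k → 0 < padicNormNat p k := by
    intro k hk
    have hne : ((k : ℚ)) ≠ 0 := by
      exact_mod_cast (Nat.one_le_iff_ne_zero.mp hk)
    have h1 := padicNorm.nonzero (p := p) hne
    have h0 := padicNorm.nonneg (p := p) (k : ℚ)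
    unfold padicNormNat
    exact_mod_cast lt_of_le_of_ne h0 (Ne.symm h1)
  have hcle1 : ∀ k : ℕ, padicNormNat p k ≤ 1 := fun k => by
    unfold padicNormNat; exact_mod_cast padicNorm.of_nat k
  have h2H : (2 : ℝ) * H ≠ 0 := by positivity
  have hrpow2 : ∀ a : ℝ, 0 ≤ a → a ^ (2 * H) = (a ^ H) ^ 2 := by
    intro a ha
    rw [mul_comm, Real.rpow_mul ha, show (2 : ℝ) = ((2 : ℕ) : ℝ) by norm_num,
      Real.rpow_natCast]
  -- laws
  have lawN : ∀ k : ℕ, 1 ≤ k →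
      Measure.map (X k) P = Measure.map (fun ω => padicNormNat p k ^ H * X 1 ω) P := by
    intro k hk
    have h := map_eq_of_eqDistFam (P := P)
      (X := fun m ω => X (k * m) ω) (Y := fun m ω => padicNormNat p k ^ H * X m ω)
      (fun i => hXmeas _) (fun i => (hXmeas i).const_mul _) (hss k hk)
      (F := fun f => f 1) (measurable_pi_apply 1)
    simpa using h
  have law0 : Measure.map (X 0) P
      = Measure.map (fun ω => padicNormNat p p ^ H * X 0 ω) P := by
    have h := map_eq_of_eqDistFam (P := P)
      (X := fun m ω => X (p * m) ω) (Y := fun m ω => padicNormNat p p ^ H * X m ω)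
      (fun i => hXmeas _) (fun i => (hXmeas i).const_mul _) (hss p hp.pos)
      (F := fun f => f 0) (measurable_pi_apply 0)
    simpa using h
  have lawD : ∀ k : ℕ, 1 ≤ k → ∀ j : ℕ,
      Measure.map (fun ω => X j ω - X 0 ω) P
        = Measure.map (fun ω => X (k + j) ω - X k ω) P := by
    intro k hk j
    have hF : Measurable (fun f : ℕ → ℝ => ∑ i ∈ Finset.range j, f i) :=
      Finset.measurable_sum _ (fun i _ => measurable_pi_apply i)
    have h := map_eq_of_eqDistFam (P := P)
      (X := fun m ω => X (m + 1) ω - X m ω)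
      (Y := fun m ω => X (m + k + 1) ω - X (m + k) ω)
      (fun i => (hXmeas _).sub (hXmeas _)) (fun i => (hXmeas _).sub (hXmeas _))
      (hsi k hk) hF
    have e1 : (fun ω => ∑ i ∈ Finset.range j, (X (i + 1) ω - X i ω))
        = fun ω => X j ω - X 0 ω := by
      funext ω; exact Finset.sum_range_sub (fun i => X i ω) j
    have e2 : (fun ω => ∑ i ∈ Finset.range j, (X (i + k + 1) ω - X (i + k) ω))
        = fun ω => X (k + j) ω - X k ω := by
      funext ω
      calc ∑ i ∈ Finset.range j, (X (i + k + 1) ω - X (i + k) ω)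
          = ∑ i ∈ Finset.range j,
              ((fun i => X (i + k) ω) (i + 1) - (fun i => X (i + k) ω) i) := by
            refine Finset.sum_congr rfl fun i _ => ?_
            simp only
            congr 2
            omega
        _ = X (j + k) ω - X (0 + k) ω := Finset.sum_range_sub (fun i => X (i + k) ω) j
        _ = X (k + j) ω - X k ω := by rw [Nat.add_comm j k, Nat.zero_add]
    rw [← e1, ← e2]
    exact h
  -- square integrability
  have hM1 : MemLp (X 1) 2 P :=
    (memLp_two_iff_integrable_sq (hXmeas 1).aestronglyMeasurable).2 hL2
  have hMn : ∀ k : ℕ, 1 ≤ k → MemLp (X k) 2 P := fun k hk =>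
    memLp2_of_map_eq ((hXmeas 1).const_mul _) (hXmeas k) (lawN k hk).symm
      (hM1.const_mul _)
  have hM2 : MemLp (fun ω => X 2 ω - X 1 ω) 2 P := (hMn 2 (by norm_num)).sub hM1
  have hM10 : MemLp (fun ω => X 1 ω - X 0 ω) 2 P := by
    refine memLp2_of_map_eq ((hXmeas _).sub (hXmeas 1)) ((hXmeas 1).sub (hXmeas 0))
      (lawD 1 le_rfl 1).symm ?_
    have h : (1 + 1 : ℕ) = 2 := rfl
    rw [h]
    exact hM2
  have hM0 : MemLp (X 0) 2 P := by
    have h := hM1.sub hM10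
    have e : (X 1 - fun ω => X 1 ω - X 0 ω) = X 0 := by
      funext ω; simp
    rwa [e] at h
  have hMall : ∀ k : ℕ, MemLp (X k) 2 P := by
    intro k
    cases k with
    | zero => exact hM0
    | succ i => exact hMn _ i.succ_pos
  -- second moments
  have m2 : ∀ k, 1 ≤ k → ∫ ω, (X k ω) ^ 2 ∂P
      = padicNormNat p k ^ (2 * H) * ∫ ω, (X 1 ω) ^ 2 ∂P := by
    intro k hk
    have h := integral_comp_eq_of_map_eq (hXmeas k) ((hXmeas 1).const_mul _)
      (lawN k hk) hsq
    rw [h]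
    have e : ∀ ω, (padicNormNat p k ^ H * X 1 ω) ^ 2
        = (padicNormNat p k ^ H) ^ 2 * (X 1 ω) ^ 2 := fun ω => by ring
    simp_rw [e]
    rw [integral_const_mul, hrpow2 _ (hcnn k)]
  have m1 : ∀ k, 1 ≤ k → ∫ ω, X k ω ∂P = padicNormNat p k ^ H * ∫ ω, X 1 ω ∂P := by
    intro k hk
    have h := integral_comp_eq_of_map_eq (hXmeas k) ((hXmeas 1).const_mul _)
      (lawN k hk) measurable_id
    simpa [integral_const_mul] using h
  -- X 0 vanishes
  have h0sq : ∫ ω, (X 0 ω) ^ 2 ∂P = 0 := by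
    have h := integral_comp_eq_of_map_eq (hXmeas 0) ((hXmeas 0).const_mul _) law0 hsq
    have e : ∀ ω, (padicNormNat p p ^ H * X 0 ω) ^ 2
        = (padicNormNat p p ^ H) ^ 2 * (X 0 ω) ^ 2 := fun ω => by ring
    simp_rw [e] at h
    rw [integral_const_mul] at h
    have hpp : padicNormNat p p = ((p : ℝ))⁻¹ := by
      unfold padicNormNat
      rw [padicNorm.padicNorm_p hp.one_lt]
      push_cast
      ring
    have hp1 : (1 : ℝ) < p := by exact_mod_cast hp.one_lt
    have hlt : padicNormNat p p ^ H < 1 := by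
      refine Real.rpow_lt_one (hcnn p) ?_ hH
      rw [hpp]
      rw [inv_lt_one_iff₀]
      right; exact hp1
    have hpos : 0 < padicNormNat p p ^ H :=
      Real.rpow_pos_of_pos (hcpos p hp.pos) H
    have ha2 : (padicNormNat p p ^ H) ^ 2 < 1 := by nlinarith
    have h1 : (1 - (padicNormNat p p ^ H) ^ 2) * ∫ ω, (X 0 ω) ^ 2 ∂P = 0 := by
      ring_nf
      ring_nf at h
      linarith
    rcases mul_eq_zero.1 h1 with h2 | h2
    · nlinarith
    · exact h2
  have hX0ae : X 0 =ᵐ[P] 0 := by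
    have hint : Integrable (fun ω => (X 0 ω) ^ 2) P := hM0.integrable_sq
    have h := (integral_eq_zero_iff_of_nonneg (fun ω => sq_nonneg _) hint).1 h0sq
    filter_upwards [h] with ω hω
    have h2 : (X 0 ω) ^ 2 = 0 := hω
    exact (pow_eq_zero_iff (by norm_num : (2:ℕ) ≠ 0)).1 h2
  have hEX0 : ∫ ω, X 0 ω ∂P = 0 := by
    rw [integral_congr_ae hX0ae]
    simp
  -- the mean of X 1 vanishes
  have hEX1 : ∫ ω, X 1 ω ∂P = 0 := by
    have h := integral_comp_eq_of_map_eq ((hXmeas 1).sub (hXmeas 0))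
      ((hXmeas (1 + 1)).sub (hXmeas 1)) (lawD 1 le_rfl 1) measurable_id
    simp only [id, Pi.sub_apply] at h
    rw [integral_sub (hM1.integrable one_le_two) (hM0.integrable one_le_two),
      integral_sub ((hMall (1 + 1)).integrable one_le_two) (hM1.integrable one_le_two)]
      at h
    have h2 : (1 + 1 : ℕ) = 2 := rfl
    rw [h2] at h
    rw [m1 2 (by norm_num), hEX0] at h
    have hle : padicNormNat p 2 ^ H ≤ 1 :=
      Real.rpow_le_one (hcnn 2) (hcle1 2) hH.le
    nlinarith [h]
  have hEXn : ∀ k : ℕ, ∫ ω, X k ω ∂P = 0 := by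
    intro k
    cases k with
    | zero => exact hEX0
    | succ i => rw [m1 _ i.succ_pos, hEX1, mul_zero]
  -- second moments including 0
  have sqmom : ∀ k : ℕ, ∫ ω, (X k ω) ^ 2 ∂P
      = padicNormNat p k ^ (2 * H) * ∫ ω, (X 1 ω) ^ 2 ∂P := by
    intro k
    cases k with
    | zero => rw [h0sq, hc0, Real.zero_rpow h2H, zero_mul]
    | succ i => exact m2 _ i.succ_pos
  -- increments
  have dge : ∀ a b : ℕ, b < a → ∫ ω, (X a ω - X b ω) ^ 2 ∂P
      = padicNormNat p (a - b) ^ (2 * H) * ∫ ω, (X 1 ω) ^ 2 ∂P := by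
    intro a b hab
    rcases Nat.eq_zero_or_pos b with hb | hb
    · subst hb
      have e : (fun ω => (X a ω - X 0 ω) ^ 2) =ᵐ[P] fun ω => (X a ω) ^ 2 := by
        filter_upwards [hX0ae] with ω hω
        rw [Pi.zero_apply] at hω
        rw [hω, sub_zero]
      rw [integral_congr_ae e, Nat.sub_zero]
      exact sqmom a
    · have hlaw := lawD b hb (a - b)
      rw [Nat.add_sub_cancel' hab.le] at hlaw
      have h := integral_comp_eq_of_map_eq ((hXmeas _).sub (hXmeas 0))
        ((hXmeas a).sub (hXmeas b)) hlaw hsq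
      simp only [Pi.sub_apply] at h
      rw [← h]
      have e : (fun ω => (X (a - b) ω - X 0 ω) ^ 2) =ᵐ[P] fun ω => (X (a - b) ω) ^ 2 := by
        filter_upwards [hX0ae] with ω hω
        rw [Pi.zero_apply] at hω
        rw [hω, sub_zero]
      rw [integral_congr_ae e]
      exact sqmom _
  have hsubeq : ∀ a b : ℕ, b ≤ a → padicNormSub p a b = padicNormNat p (a - b) := by
    intro a b h
    unfold padicNormSub padicNormNat
    rw [Nat.cast_sub h]
  have hsubsymm : ∀ a b : ℕ, padicNormSub p a b = padicNormSub p b a := by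
    intro a b
    unfold padicNormSub
    rw [show (a : ℚ) - b = -((b : ℚ) - a) by ring, padicNorm.neg]
  have dall : ∀ a b : ℕ, ∫ ω, (X a ω - X b ω) ^ 2 ∂P
      = padicNormSub p a b ^ (2 * H) * ∫ ω, (X 1 ω) ^ 2 ∂P := by
    intro a b
    rcases lt_trichotomy a b with h | h | h
    · have e : ∀ ω, (X a ω - X b ω) ^ 2 = (X b ω - X a ω) ^ 2 := fun ω => by ring
      simp_rw [e]
      rw [dge b a h, hsubsymm, hsubeq b a h.le]
    · subst h
      have e : ∀ ω, (X a ω - X a ω) ^ 2 = (0 : ℝ) := fun ω => by ring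
      simp_rw [e]
      rw [integral_zero]
      have : padicNormSub p a a = 0 := by
        unfold padicNormSub
        simp
      rw [this, Real.zero_rpow h2H, zero_mul]
    · rw [dge a b h, hsubeq a b h.le]
  -- covariance computations
  have hcov1 : cov P (X 1) (X 1) = ∫ ω, (X 1 ω) ^ 2 ∂P := by
    unfold cov
    rw [hEX1]
    simp only [sub_zero]
    simp_rw [← pow_two]
  intro m n
  have hcov : cov P (X n) (X m) = ∫ ω, X n ω * X m ω ∂P := by
    unfold cov
    rw [hEXn n, hEXn m]
    simp only [sub_zero]
  rw [hcov, hcov1]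
  have e : (fun ω => X n ω * X m ω)
      = fun ω => (1 / 2 : ℝ) * ((X n ω) ^ 2 + (X m ω) ^ 2 - (X n ω - X m ω) ^ 2) := by
    funext ω; ring
  have i1 : Integrable (fun ω => (X n ω) ^ 2) P := (hMall n).integrable_sq
  have i2 : Integrable (fun ω => (X m ω) ^ 2) P := (hMall m).integrable_sq
  have i3 : Integrable (fun ω => (X n ω - X m ω) ^ 2) P := by
    have h := ((hMall n).sub (hMall m)).integrable_sq
    exact h
  have i12 : Integrable (fun ω => (X n ω) ^ 2 + (X m ω) ^ 2) P := by
    exact i1.add i2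
  rw [e, integral_const_mul, integral_sub i12 i3, integral_add i1 i2,
    sqmom n, sqmom m, dall n m]
  ring
end
end

section
/- Let p be a prime and 0 < b < 1. Let {Y^k_j : k ∈ ℕ₀, 0 ≤ j ≤ p^{k+1}−1} be mutually independent real random variables, all with the same law μ, where μ is not a point mass and where E|Y − Y'|^q < ∞ for some q > 0 for independent Y, Y' with law μ. Extend each row periodically by setting Y^k_n := Y^k_{n mod p^{k+1}} for all n ∈ ℕ₀. Then: (i) for every n ∈ ℕ₀ the series Σ_{k=0}^∞ b^k·(Y^k_n − Y^k_0) converges almost surely; and (ii) the process X = (X_n)_{n∈ℕ₀} defined by X_n = Σ_{k=0}^∞ b^k·(Y^k_n − Y^k_0) is a dt-ss-si process with scaling function n ↦ (|n|_p)^H, where H = −log_p(b). -/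
open MeasureTheory ProbabilityTheory Filter

noncomputable section

open scoped ENNReal NNReal

section Aux

variable {Ω : Type*} [MeasurableSpace Ω] {P : Measure Ω} [IsProbabilityMeasure P]

lemma iIndepFun_reindex {ι κ : Type*} (g : κ → ι) (hg : Function.Injective g)
    {W : ι → Ω → ℝ} (h : iIndepFun W P) :
    iIndepFun (fun j => W (g j)) P := by
  rw [iIndepFun_iff_measure_inter_preimage_eq_mul] at h ⊢
  intro S sets hsets
  classical
  have h' := h (S.image g) (sets := fun i => Function.extend g sets (fun _ => Set.univ) i) ?_
  · have e1 : (⋂ i ∈ S.image g, W i ⁻¹' Function.extend g sets (fun _ => Set.univ) i)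
        = ⋂ j ∈ S, W (g j) ⁻¹' sets j := by
      ext ω
      simp only [Set.mem_iInter, Finset.mem_image]
      constructor
      · intro hi j hj
        have := hi (g j) ⟨j, hj, rfl⟩
        rwa [hg.extend_apply] at this
      · rintro hi i ⟨j, hj, rfl⟩
        rw [hg.extend_apply]; exact hi j hj
    rw [e1] at h'
    rw [h', Finset.prod_image (fun a _ b _ hab => hg hab)]
    refine Finset.prod_congr rfl fun j hj => ?_
    rw [hg.extend_apply]
  · rintro i hi
    rcases Finset.mem_image.mp hi with ⟨j, hj, rfl⟩
    simpa only [hg.extend_apply] using hsets j hj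

lemma iid_finite_marginal {ι : Type*} (μ : Measure ℝ) [IsProbabilityMeasure μ]
    {W : ι → Ω → ℝ} (hm : ∀ i, Measurable (W i))
    (hind : iIndepFun W P)
    (hlaw : ∀ i, P.map (W i) = μ) (s : Finset ι) :
    P.map (fun ω (i : s) => W i ω) = Measure.pi (fun _ : s => μ) := by
  classical
  refine (Measure.pi_eq fun A hA => ?_).symm
  set B : ι → Set ℝ := Function.extend (Subtype.val : s → ι) A (fun _ => Set.univ) with hB
  have key : ∀ i : s, B (i : ι) = A i := fun i => by
    rw [hB]
    have := Subtype.val_injective.extend_apply A (fun _ => (Set.univ : Set ℝ)) i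
    simpa using this
  have hmeas : Measurable (fun ω (i : s) => W i ω) :=
    measurable_pi_lambda _ fun i => hm i
  rw [Measure.map_apply hmeas (MeasurableSet.univ_pi hA)]
  have hpre : (fun ω (i : s) => W i ω) ⁻¹' (Set.pi Set.univ A) = ⋂ i ∈ s, W i ⁻¹' B i := by
    ext ω
    simp only [Set.mem_preimage, Set.mem_pi, Set.mem_univ, forall_true_left, Set.mem_iInter]
    constructor
    · intro h i hi
      have := h ⟨i, hi⟩
      rwa [key ⟨i, hi⟩]
    · intro h i
      have := h i.1 i.2
      rwa [key i] at this
  rw [hpre]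
  rw [hind.measure_inter_preimage_eq_mul s (sets := B)
      (fun i hi => by rw [show B i = A ⟨i, hi⟩ from key ⟨i, hi⟩]; exact hA _)]
  rw [← Finset.prod_coe_sort]
  refine Finset.prod_congr rfl fun i _ => ?_
  rw [key i, ← hlaw i, Measure.map_apply (hm i) (hA i)]

lemma iid_map_eq {ι : Type*} [Countable ι] (μ : Measure ℝ) [IsProbabilityMeasure μ]
    {W W' : ι → Ω → ℝ} (hm : ∀ i, Measurable (W i)) (hm' : ∀ i, Measurable (W' i))
    (hind : iIndepFun W P)
    (hind' : iIndepFun W' P)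
    (hlaw : ∀ i, P.map (W i) = μ) (hlaw' : ∀ i, P.map (W' i) = μ) :
    P.map (fun ω i => W i ω) = P.map (fun ω i => W' i ω) := by
  have hΦ : Measurable (fun ω (i : ι) => W i ω) := measurable_pi_lambda _ hm
  have hΦ' : Measurable (fun ω (i : ι) => W' i ω) := measurable_pi_lambda _ hm'
  have h1 : IsProbabilityMeasure (P.map (fun ω i => W i ω)) :=
    Measure.isProbabilityMeasure_map hΦ.aemeasurable
  have h2 : IsProbabilityMeasure (P.map (fun ω i => W' i ω)) :=
    Measure.isProbabilityMeasure_map hΦ'.aemeasurable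
  refine MeasureTheory.ext_of_generate_finite (measurableCylinders (fun _ : ι => ℝ))
    generateFrom_measurableCylinders.symm isPiSystem_measurableCylinders (fun t ht => ?_)
    (by simp)
  obtain ⟨s, S, hS, rfl⟩ := (mem_measurableCylinders _).mp ht
  have hcyl : ∀ (V : ι → Ω → ℝ), Measurable (fun ω (i : ι) => V i ω) →
      (fun ω (i : ι) => V i ω) ⁻¹' cylinder s S = (fun ω (i : s) => V i ω) ⁻¹' S := by
    intro V hV; rfl
  rw [Measure.map_apply hΦ (hS.cylinder s), Measure.map_apply hΦ' (hS.cylinder s),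
    hcyl W hΦ, hcyl W' hΦ',
    ← Measure.map_apply (measurable_pi_lambda _ fun i : s => hm i) hS,
    ← Measure.map_apply (measurable_pi_lambda _ fun i : s => hm' i) hS,
    iid_finite_marginal μ hm hind hlaw s, iid_finite_marginal μ hm' hind' hlaw' s]

lemma conv_aux {b : ℝ} (hb0 : 0 < b) (hb1 : b < 1) (r : ℝ) (hr0 : 0 < r) (hr1 : r ≤ 1)
    (Δ : ℕ → Ω → ℝ) (hΔ : ∀ k, Measurable (Δ k))
    (C : ℝ≥0∞) (hC : C ≠ ∞)
    (hint : ∀ k, ∫⁻ ω, ENNReal.ofReal (|Δ k ω| ^ r) ∂P ≤ C) :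
    ∀ᵐ ω ∂P, ∃ L, Tendsto (fun K => ∑ k ∈ Finset.range K, b ^ k * Δ k ω) atTop (nhds L) := by
  set G : ℕ → Ω → ℝ≥0∞ := fun k ω => ENNReal.ofReal ((b ^ k * |Δ k ω|) ^ r) with hG
  have hGmeas : ∀ k, Measurable (G k) := by
    intro k
    exact ((((hΔ k).abs).const_mul _).pow measurable_const).ennreal_ofReal
  have hGbound : ∀ k, ∫⁻ ω, G k ω ∂P ≤ ENNReal.ofReal ((b ^ r) ^ k) * C := by
    intro k
    have heq : ∀ ω, G k ω = ENNReal.ofReal ((b ^ r) ^ k) * ENNReal.ofReal (|Δ k ω| ^ r) := by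
      intro ω
      rw [hG]
      simp only
      rw [Real.mul_rpow (by positivity) (abs_nonneg _), ← ENNReal.ofReal_mul (by positivity)]
      congr 2
      rw [← Real.rpow_natCast b k, ← Real.rpow_natCast (b ^ r) k, ← Real.rpow_mul hb0.le,
        ← Real.rpow_mul hb0.le, mul_comm]
    simp only [heq]
    rw [lintegral_const_mul _ (((hΔ k).abs.pow measurable_const).ennreal_ofReal)]
    exact mul_le_mul_right (hint k) _
  have hsum : ∑' k, ∫⁻ ω, G k ω ∂P < ∞ := by
    refine lt_of_le_of_lt (ENNReal.tsum_le_tsum hGbound) ?_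
    have : ∑' k, ENNReal.ofReal ((b ^ r) ^ k) * C = (∑' k, (ENNReal.ofReal (b ^ r)) ^ k) * C := by
      rw [ENNReal.tsum_mul_right]
      congr 1
      exact tsum_congr fun k => by rw [ENNReal.ofReal_pow (by positivity)]
    rw [this, ENNReal.tsum_geometric]
    refine ENNReal.mul_lt_top ?_ hC.lt_top
    rw [ENNReal.inv_lt_top, tsub_pos_iff_lt, ENNReal.ofReal_lt_one]
    exact Real.rpow_lt_one hb0.le hb1 hr0
  have hae : ∀ᵐ ω ∂P, ∑' k, G k ω < ∞ := by
    have hlt : ∫⁻ ω, ∑' k, G k ω ∂P < ∞ := by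
      rw [lintegral_tsum fun k => (hGmeas k).aemeasurable]
      exact hsum
    exact ae_lt_top (Measurable.ennreal_tsum hGmeas) hlt.ne
  filter_upwards [hae] with ω hω
  have hG0 : Tendsto (fun k => G k ω) atTop (nhds 0) :=
    ENNReal.tendsto_atTop_zero_of_tsum_ne_top hω.ne
  have hev : ∀ᶠ k in atTop, G k ω < 1 :=
    hG0.eventually_lt_const (by norm_num)
  obtain ⟨N, hN⟩ := hev.exists_forall_of_atTop
  have habs : Summable (fun k => b ^ k * |Δ k ω|) := by
    rw [← summable_nat_add_iff N]
    have hle : ∀ k : ℕ, b ^ (k + N) * |Δ (k + N) ω| ≤ (G (k + N) ω).toReal := by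
      intro k
      have h1 : G (k + N) ω < 1 := hN (k + N) (by omega)
      have hx0 : (0:ℝ) ≤ b ^ (k + N) * |Δ (k + N) ω| := by positivity
      have hx1 : b ^ (k + N) * |Δ (k + N) ω| ≤ 1 := by
        by_contra hcon
        push_neg at hcon
        have : (1:ℝ) ≤ (b ^ (k + N) * |Δ (k + N) ω|) ^ r :=
          Real.one_le_rpow hcon.le hr0.le
        have : (1:ℝ≥0∞) ≤ G (k + N) ω := by
          rw [hG]
          simpa using ENNReal.one_le_ofReal.mpr this
        exact absurd h1 (not_lt.mpr this)
      have h2 : b ^ (k + N) * |Δ (k + N) ω| ≤ (b ^ (k + N) * |Δ (k + N) ω|) ^ r := by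
        rcases eq_or_lt_of_le hx0 with h0 | h0
        · rw [← h0, Real.zero_rpow hr0.ne']
        · calc b ^ (k + N) * |Δ (k + N) ω| = (b ^ (k + N) * |Δ (k + N) ω|) ^ (1:ℝ) := by
                rw [Real.rpow_one]
          _ ≤ (b ^ (k + N) * |Δ (k + N) ω|) ^ r :=
                Real.rpow_le_rpow_of_exponent_ge h0 hx1 hr1
      refine h2.trans ?_
      rw [hG]
      simp only
      rw [ENNReal.toReal_ofReal (by positivity)]
    refine Summable.of_nonneg_of_le (fun k => by positivity) hle ?_
    refine ENNReal.summable_toReal ?_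
    have : ∑' k, G (k + N) ω ≤ ∑' k, G k ω :=
      ENNReal.tsum_comp_le_tsum_of_injective (add_left_injective N) (fun k => G k ω)
    exact (lt_of_le_of_lt this hω).ne
  have hsum2 : Summable (fun k => b ^ k * Δ k ω) := by
    refine Summable.of_abs (habs.congr fun k => ?_)
    rw [abs_mul, abs_of_nonneg (by positivity : (0:ℝ) ≤ b ^ k)]
  exact ⟨_, hsum2.hasSum.tendsto_sum_nat⟩

lemma moment_r (ν : Measure (ℝ × ℝ)) [IsProbabilityMeasure ν] {q r : ℝ}
    (hint : Integrable (fun yy : ℝ × ℝ => |yy.1 - yy.2| ^ q) ν)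
    (hr0 : 0 < r) (hrq : r ≤ q) :
    ∫⁻ yy, ENNReal.ofReal (|yy.1 - yy.2| ^ r) ∂ν < ∞ := by
  have hle : ∀ yy : ℝ × ℝ, ENNReal.ofReal (|yy.1 - yy.2| ^ r)
      ≤ 1 + ENNReal.ofReal (|yy.1 - yy.2| ^ q) := by
    intro yy
    set x := |yy.1 - yy.2| with hx
    have hx0 : 0 ≤ x := abs_nonneg _
    rcases le_or_gt x 1 with h1 | h1
    · refine le_trans ?_ le_self_add
      rw [← ENNReal.ofReal_one]
      exact ENNReal.ofReal_le_ofReal (Real.rpow_le_one hx0 h1 hr0.le)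
    · refine le_trans ?_ le_add_self
      exact ENNReal.ofReal_le_ofReal (Real.rpow_le_rpow_of_exponent_le h1.le hrq)
  calc ∫⁻ yy, ENNReal.ofReal (|yy.1 - yy.2| ^ r) ∂ν
      ≤ ∫⁻ yy, (1 + ENNReal.ofReal (|yy.1 - yy.2| ^ q)) ∂ν := lintegral_mono hle
    _ = 1 + ∫⁻ yy, ENNReal.ofReal (|yy.1 - yy.2| ^ q) ∂ν := by
        rw [lintegral_add_left measurable_const, lintegral_one, measure_univ]
    _ < ∞ := by
        rw [ENNReal.add_lt_top]
        exact ⟨ENNReal.one_lt_top, hint.lintegral_lt_top⟩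

lemma padic_pow_eq (p : ℕ) (hp : p.Prime) (b : ℝ) (hb0 : 0 < b) (n : ℕ) (hn : n ≠ 0) :
    (padicNormNat p n) ^ (-(Real.logb p b)) = b ^ (padicValNat p n) := by
  have hp1 : (1:ℝ) < p := by exact_mod_cast hp.one_lt
  have hp0 : (0:ℝ) < p := lt_trans one_pos hp1
  set v := padicValNat p n with hv
  have hq : padicNorm p (n:ℚ) = (p:ℚ) ^ (-(v:ℤ)) := by
    rw [padicNorm.eq_zpow_of_nonzero (by exact_mod_cast hn)]
    congr
    rw [hv, padicValRat.of_nat]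
  have h1 : padicNormNat p n = (p:ℝ) ^ (-(v:ℤ)) := by
    rw [padicNormNat, hq]
    push_cast
    ring
  rw [h1, ← Real.rpow_intCast (p:ℝ) (-(v:ℤ)), ← Real.rpow_natCast b v,
    ← Real.rpow_mul hp0.le]
  rw [show ((-(v:ℤ) : ℤ) : ℝ) * (-(Real.logb p b)) = (Real.logb p b) * (v : ℝ) by
    push_cast; ring]
  rw [Real.rpow_mul hp0.le, Real.rpow_logb hp0 hp1.ne' hb0]

end Aux

/-- Example 3.1: the series `∑ₖ bᵏ (Yᵏ_n − Yᵏ_0)`, built from an i.i.d. array extended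
`p^{k+1}`-periodically in each row, converges a.s. and defines a dt-ss-si process of
type II with `H = -log_p b`. -/
theorem stmt14 {Ω : Type*} [MeasurableSpace Ω] (P : Measure Ω) [IsProbabilityMeasure P]
    (p : ℕ) (hp : p.Prime) (b : ℝ) (hb0 : 0 < b) (hb1 : b < 1)
    (Y : ℕ → ℕ → Ω → ℝ) (hYmeas : ∀ k j, Measurable (Y k j))
    (μ : Measure ℝ) [IsProbabilityMeasure μ]
    (hlaw : ∀ k j : ℕ, j < p ^ (k + 1) → Measure.map (Y k j) P = μ)
    (hindep : iIndepFun
      (fun kj : {q : ℕ × ℕ // q.2 < p ^ (q.1 + 1)} => Y kj.1.1 kj.1.2) P)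
    (hnd : ∀ c : ℝ, μ ≠ Measure.dirac c)
    (hmom : ∃ q : ℝ, 0 < q ∧
      Integrable (fun yy : ℝ × ℝ => |yy.1 - yy.2| ^ q) (μ.prod μ)) :
    (∀ n : ℕ, ∀ᵐ ω ∂P, ∃ L : ℝ, Filter.Tendsto
        (fun K : ℕ => ∑ k ∈ Finset.range K,
          b ^ k * (Y k (n % p ^ (k + 1)) ω - Y k 0 ω)) Filter.atTop (nhds L)) ∧
    ∃ X : ℕ → Ω → ℝ, (∀ n, Measurable (X n)) ∧
      (∀ n : ℕ, ∀ᵐ ω ∂P, Filter.Tendsto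
        (fun K : ℕ => ∑ k ∈ Finset.range K,
          b ^ k * (Y k (n % p ^ (k + 1)) ω - Y k 0 ω)) Filter.atTop (nhds (X n ω))) ∧
      SelfSimilar P X (fun n => (padicNormNat p n) ^ (-(Real.logb p b))) ∧
      StationaryIncrements P X := by
  classical
  obtain ⟨q, hq0, hintq⟩ := hmom
  set r : ℝ := min q 1 with hrdef
  have hr0 : 0 < r := lt_min hq0 one_pos
  have hr1 : r ≤ 1 := min_le_right _ _
  have hrq : r ≤ q := min_le_left _ _
  have hC := moment_r (μ.prod μ) hintq hr0 hrq
  have hpk : ∀ k : ℕ, 0 < p ^ (k + 1) := fun k => pow_pos hp.pos _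
  -- part (i)
  have parti : ∀ n : ℕ, ∀ᵐ ω ∂P, ∃ L : ℝ, Tendsto
      (fun K : ℕ => ∑ k ∈ Finset.range K,
        b ^ k * (Y k (n % p ^ (k + 1)) ω - Y k 0 ω)) atTop (nhds L) := by
    intro n
    refine conv_aux hb0 hb1 r hr0 hr1 (fun k ω => Y k (n % p ^ (k + 1)) ω - Y k 0 ω)
      (fun k => (hYmeas _ _).sub (hYmeas _ _)) _ hC.ne (fun k => ?_)
    by_cases hz : n % p ^ (k + 1) = 0
    · simp [hz, Real.zero_rpow hr0.ne']
    · -- pair law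
      have halt : n % p ^ (k + 1) < p ^ (k + 1) := Nat.mod_lt _ (hpk k)
      set a := n % p ^ (k + 1) with ha
      have hidx : (⟨(k, a), halt⟩ : {q : ℕ × ℕ // q.2 < p ^ (q.1 + 1)})
          ≠ ⟨(k, 0), by simpa using hpk k⟩ := by
        simp [Subtype.ext_iff, Prod.ext_iff, hz]
      have hIndep : IndepFun (Y k a) (Y k 0) P := hindep.indepFun hidx
      have hmap : P.map (fun ω => (Y k a ω, Y k 0 ω)) = μ.prod μ := by
        rw [(indepFun_iff_map_prod_eq_prod_map_map (hYmeas k a).aemeasurable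
          (hYmeas k 0).aemeasurable).mp hIndep, hlaw k a halt, hlaw k 0 (by simpa using hpk k)]
      have hmeasF : Measurable (fun yy : ℝ × ℝ => ENNReal.ofReal (|yy.1 - yy.2| ^ r)) :=
        (((measurable_fst.sub measurable_snd).abs).pow measurable_const).ennreal_ofReal
      rw [← hmap, lintegral_map hmeasF ((hYmeas k a).prodMk (hYmeas k 0))]
  refine ⟨parti, ?_⟩
  -- the canonical array and its law
  let idx : ℕ → ℕ → {q : ℕ × ℕ // q.2 < p ^ (q.1 + 1)} :=
    fun k m => ⟨(k, m % p ^ (k + 1)), Nat.mod_lt _ (hpk k)⟩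
  let Z : {q : ℕ × ℕ // q.2 < p ^ (q.1 + 1)} → Ω → ℝ := fun i => Y i.1.1 i.1.2
  have hZmeas : ∀ i, Measurable (Z i) := fun i => hYmeas _ _
  have hZlaw : ∀ i, P.map (Z i) = μ := fun i => hlaw _ _ i.2
  let Φ : Ω → ({q : ℕ × ℕ // q.2 < p ^ (q.1 + 1)} → ℝ) := fun ω i => Z i ω
  have hΦ : Measurable Φ := measurable_pi_lambda _ fun i => hYmeas _ _
  let ν : Measure ({q : ℕ × ℕ // q.2 < p ^ (q.1 + 1)} → ℝ) := P.map Φ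
  haveI hνP : IsProbabilityMeasure ν := Measure.isProbabilityMeasure_map hΦ.aemeasurable
  let S : ℕ → ({q : ℕ × ℕ // q.2 < p ^ (q.1 + 1)} → ℝ) → ℕ → ℝ :=
    fun m y K => ∑ k ∈ Finset.range K, b ^ k * (y (idx k m) - y (idx k 0))
  have hSmeas : ∀ m K, Measurable fun y => S m y K := fun m K =>
    Finset.measurable_sum _ fun k _ =>
      ((measurable_pi_apply (idx k m)).sub (measurable_pi_apply (idx k 0))).const_mul _
  have hSΦ : ∀ m ω, (fun K => S m (Φ ω) K) = fun K => ∑ k ∈ Finset.range K,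
      b ^ k * (Y k (m % p ^ (k + 1)) ω - Y k 0 ω) := by
    intro m ω
    funext K
    refine Finset.sum_congr rfl fun k _ => ?_
    simp [S, Φ, Z, idx, Nat.zero_mod]
  have hνconv : ∀ m : ℕ, ∀ᵐ y ∂ν, ∃ L, Tendsto (fun K => S m y K) atTop (nhds L) := by
    intro m
    have hset : MeasurableSet {y : {q : ℕ × ℕ // q.2 < p ^ (q.1 + 1)} → ℝ |
        ∃ L, Tendsto (fun K => S m y K) atTop (nhds L)} :=
      measurableSet_exists_tendsto (fun K => hSmeas m K)
    rw [show ν = P.map Φ from rfl, ae_map_iff hΦ.aemeasurable hset]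
    filter_upwards [parti m] with ω hω
    show ∃ L, Tendsto (fun K => S m (Φ ω) K) atTop (nhds L)
    rw [hSΦ m ω]
    exact hω
  have hg : ∀ m : ℕ, ∃ gm, Measurable gm ∧
      ∀ᵐ y ∂ν, Tendsto (fun K => S m y K) atTop (nhds (gm y)) := fun m =>
    measurable_limit_of_tendsto_metrizable_ae (fun K => (hSmeas m K).aemeasurable) (hνconv m)
  choose g hgmeas hgt using hg
  have hgt' : ∀ᵐ y ∂ν, ∀ m, Tendsto (fun K => S m y K) atTop (nhds (g m y)) :=
    ae_all_iff.mpr hgt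
  -- relabeling invariance of the law
  have hmapσ : ∀ σ, Function.Injective σ →
      Measure.map (fun y : {q : ℕ × ℕ // q.2 < p ^ (q.1 + 1)} → ℝ => y ∘ σ) ν = ν := by
    intro σ hσ
    have hcomp : Measurable (fun y : {q : ℕ × ℕ // q.2 < p ^ (q.1 + 1)} → ℝ => y ∘ σ) :=
      measurable_pi_lambda _ fun i => measurable_pi_apply _
    rw [show ν = P.map Φ from rfl, Measure.map_map hcomp hΦ]
    exact iid_map_eq μ (fun i => hZmeas _) hZmeas (iIndepFun_reindex σ hσ hindep) hindep
      (fun i => hZlaw _) hZlaw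
  have htransport : ∀ σ, Function.Injective σ →
      (∀ᵐ y ∂ν, ∀ m, Tendsto (fun K => S m (y ∘ σ) K) atTop (nhds (g m (y ∘ σ)))) := by
    intro σ hσ
    have hcomp : Measurable (fun y : {q : ℕ × ℕ // q.2 < p ^ (q.1 + 1)} → ℝ => y ∘ σ) :=
      measurable_pi_lambda _ fun i => measurable_pi_apply _
    refine ae_of_ae_map
      (p := fun y => ∀ m, Tendsto (fun K => S m y K) atTop (nhds (g m y)))
      hcomp.aemeasurable ?_
    rw [hmapσ σ hσ]
    exact hgt'
  refine ⟨fun n ω => g n (Φ ω), fun n => (hgmeas n).comp hΦ, ?_, ?_, ?_⟩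
  · -- a.s. convergence to X n
    intro n
    have := ae_of_ae_map hΦ.aemeasurable (hgt n)
    filter_upwards [this] with ω hω
    rw [← hSΦ n ω]
    exact hω
  · -- self-similarity
    intro n hn
    have hn0 : n ≠ 0 := by omega
    set v := n.factorization p with hvdef
    set u := n / p ^ v with hudef
    have hnvu : n = p ^ v * u := (Nat.ordProj_mul_ordCompl_eq_self n p).symm
    have hu : ¬ p ∣ u := Nat.not_dvd_ordCompl hp hn0
    have hcop : ∀ j : ℕ, Nat.gcd (p ^ (j + 1)) u = 1 := by
      intro j
      exact Nat.Coprime.pow_left _ (((Nat.Prime.coprime_iff_not_dvd hp).mpr hu))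
    let σ : {q : ℕ × ℕ // q.2 < p ^ (q.1 + 1)} → {q : ℕ × ℕ // q.2 < p ^ (q.1 + 1)} :=
      fun i => ⟨(v + i.1.1, p ^ v * ((u * i.1.2) % p ^ (i.1.1 + 1))), by
        have h1 : (u * i.1.2) % p ^ (i.1.1 + 1) < p ^ (i.1.1 + 1) :=
          Nat.mod_lt _ (hpk i.1.1)
        show p ^ v * ((u * i.1.2) % p ^ (i.1.1 + 1)) < p ^ (v + i.1.1 + 1)
        have hsplit : p ^ (v + i.1.1 + 1) = p ^ v * p ^ (i.1.1 + 1) := by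
          rw [show v + i.1.1 + 1 = v + (i.1.1 + 1) by ring, pow_add]
        rw [hsplit]
        exact mul_lt_mul_of_pos_left h1 (pow_pos hp.pos v)⟩
    have hσ : Function.Injective σ := by
      intro i i' hii
      have h1 : v + i.1.1 = v + i'.1.1 := congrArg (fun z => z.1.1) hii
      have hj : i.1.1 = i'.1.1 := by omega
      have h2 : p ^ v * ((u * i.1.2) % p ^ (i.1.1 + 1))
          = p ^ v * ((u * i'.1.2) % p ^ (i'.1.1 + 1)) := congrArg (fun z => z.1.2) hii
      rw [← hj] at h2
      have h3 : (u * i.1.2) % p ^ (i.1.1 + 1) = (u * i'.1.2) % p ^ (i.1.1 + 1) :=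
        Nat.eq_of_mul_eq_mul_left (pow_pos hp.pos v) h2
      have h4 : i.1.2 ≡ i'.1.2 [MOD p ^ (i.1.1 + 1)] :=
        Nat.ModEq.cancel_left_of_coprime (by rw [Nat.gcd_comm]; exact Nat.Coprime.pow_right _ (((Nat.Prime.coprime_iff_not_dvd hp).mpr hu)).symm) h3
      have h5 : i.1.2 = i'.1.2 := by
        have := h4
        rw [Nat.ModEq] at this
        rw [Nat.mod_eq_of_lt i.2, hj] at this
        rw [Nat.mod_eq_of_lt i'.2] at this
        exact this
      apply Subtype.ext
      exact Prod.ext hj h5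
    have hkey0 : ∀ m k : ℕ, k < v → (n * m) % p ^ (k + 1) = 0 := by
      intro m k hk
      have hdvd : p ^ (k + 1) ∣ n * m :=
        dvd_mul_of_dvd_left ((pow_dvd_pow p (by omega)).trans (Nat.ordProj_dvd n p)) m
      exact Nat.dvd_iff_mod_eq_zero.mp hdvd
    have hkey1 : ∀ m j : ℕ, (n * m) % p ^ (v + j + 1) = p ^ v * ((u * m) % p ^ (j + 1)) := by
      intro m j
      have h1 : n * m = p ^ v * (u * m) := by rw [hnvu]; ring
      rw [h1, show v + j + 1 = v + (j + 1) by ring, pow_add, Nat.mul_mod_mul_left]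
    have hkey2 : ∀ m j : ℕ, (u * (m % p ^ (j + 1))) % p ^ (j + 1) = (u * m) % p ^ (j + 1) := by
      intro m j
      conv_lhs => rw [Nat.mul_mod, Nat.mod_mod_of_dvd _ dvd_rfl]
      conv_rhs => rw [Nat.mul_mod]
    have hsum_id : ∀ y m K, S (n * m) y (v + K) = b ^ v * S m (y ∘ σ) K := by
      intro y m K
      show (∑ k ∈ Finset.range (v + K), b ^ k * (y (idx k (n * m)) - y (idx k 0)))
        = b ^ v * ∑ k ∈ Finset.range K, b ^ k * ((y ∘ σ) (idx k m) - (y ∘ σ) (idx k 0))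
      rw [Finset.sum_range_add]
      have h0 : ∑ k ∈ Finset.range v, b ^ k * (y (idx k (n * m)) - y (idx k 0)) = 0 := by
        refine Finset.sum_eq_zero fun k hk => ?_
        have h1 : idx k (n * m) = idx k 0 := by
          apply Subtype.ext
          refine Prod.ext rfl ?_
          show (n * m) % p ^ (k + 1) = 0 % p ^ (k + 1)
          rw [hkey0 m k (Finset.mem_range.mp hk), Nat.zero_mod]
        rw [h1, sub_self, mul_zero]
      rw [h0, zero_add, Finset.mul_sum]
      refine Finset.sum_congr rfl fun j _ => ?_
      have hidx1 : idx (v + j) (n * m) = σ (idx j m) := by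
        apply Subtype.ext
        refine Prod.ext rfl ?_
        show (n * m) % p ^ (v + j + 1) = p ^ v * ((u * (m % p ^ (j + 1))) % p ^ (j + 1))
        rw [hkey1 m j, hkey2 m j]
      have hidx0 : idx (v + j) 0 = σ (idx j 0) := by
        apply Subtype.ext
        refine Prod.ext rfl ?_
        show 0 % p ^ (v + j + 1) = p ^ v * ((u * (0 % p ^ (j + 1))) % p ^ (j + 1))
        simp
      rw [pow_add, hidx1, hidx0]
      simp only [Function.comp_apply]
      ring
    have heq : ∀ᵐ y ∂ν, ∀ m, g (n * m) y = b ^ v * g m (y ∘ σ) := by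
      filter_upwards [hgt', htransport σ hσ] with y h1 h2
      intro m
      have hA : Tendsto (fun K => S (n * m) y (K + v)) atTop (nhds (g (n * m) y)) :=
        (tendsto_add_atTop_iff_nat v).mpr (h1 (n * m))
      have hB : Tendsto (fun K => b ^ v * S m (y ∘ σ) K) atTop
          (nhds (b ^ v * g m (y ∘ σ))) := (h2 m).const_mul _
      have hfe : (fun K => S (n * m) y (K + v)) = fun K => b ^ v * S m (y ∘ σ) K :=
        funext fun K => by rw [add_comm]; exact hsum_id y m K
      exact tendsto_nhds_unique (hfe ▸ hA) hB
    -- constant identification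
    have hval : padicValNat p n = v := (Nat.factorization_def n hp).symm ▸ rfl
    have hc : (padicNormNat p n) ^ (-(Real.logb p b)) = b ^ v := by
      rw [padic_pow_eq p hp b hb0 n hn0, hval]
    -- measure computation
    show Measure.map (fun ω m => g (n * m) (Φ ω)) P
      = Measure.map (fun ω m => (padicNormNat p n) ^ (-(Real.logb p b)) * g m (Φ ω)) P
    have hcomp : Measurable (fun y : {q : ℕ × ℕ // q.2 < p ^ (q.1 + 1)} → ℝ => y ∘ σ) :=
      measurable_pi_lambda _ fun i => measurable_pi_apply _
    have hFmeas : Measurable (fun y (m : ℕ) => g (n * m) y) :=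
      measurable_pi_lambda _ fun m => hgmeas _
    have hF'meas : Measurable (fun y (m : ℕ) => b ^ v * g m y) :=
      measurable_pi_lambda _ fun m => (hgmeas m).const_mul _
    calc Measure.map (fun ω m => g (n * m) (Φ ω)) P
        = Measure.map (fun y (m : ℕ) => g (n * m) y) ν := (Measure.map_map hFmeas hΦ).symm
      _ = Measure.map (fun y (m : ℕ) => b ^ v * g m (y ∘ σ)) ν :=
          Measure.map_congr (heq.mono fun y hy => funext hy)
      _ = Measure.map ((fun y (m : ℕ) => b ^ v * g m y) ∘ (fun y => y ∘ σ)) ν := rfl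
      _ = Measure.map (fun y (m : ℕ) => b ^ v * g m y)
            (Measure.map (fun y => y ∘ σ) ν) := (Measure.map_map hF'meas hcomp).symm
      _ = Measure.map (fun y (m : ℕ) => b ^ v * g m y) ν := by rw [hmapσ σ hσ]
      _ = Measure.map (fun ω (m : ℕ) => b ^ v * g m (Φ ω)) P := Measure.map_map hF'meas hΦ
      _ = Measure.map (fun ω (m : ℕ) =>
            (padicNormNat p n) ^ (-(Real.logb p b)) * g m (Φ ω)) P := by rw [hc]
  · -- stationary increments
    intro k hk
    let τ : {q : ℕ × ℕ // q.2 < p ^ (q.1 + 1)} → {q : ℕ × ℕ // q.2 < p ^ (q.1 + 1)} :=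
      fun i => ⟨(i.1.1, (i.1.2 + k) % p ^ (i.1.1 + 1)), Nat.mod_lt _ (hpk i.1.1)⟩
    have hτ : Function.Injective τ := by
      intro i i' hii
      have hj : i.1.1 = i'.1.1 := congrArg (fun z => z.1.1) hii
      have h2 : (i.1.2 + k) % p ^ (i.1.1 + 1) = (i'.1.2 + k) % p ^ (i'.1.1 + 1) :=
        congrArg (fun z => z.1.2) hii
      rw [← hj] at h2
      have h4 : i.1.2 ≡ i'.1.2 [MOD p ^ (i.1.1 + 1)] := Nat.ModEq.add_right_cancel' k h2
      have h5 : i.1.2 = i'.1.2 := by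
        have := h4
        rw [Nat.ModEq] at this
        rw [Nat.mod_eq_of_lt i.2, hj] at this
        rw [Nat.mod_eq_of_lt i'.2] at this
        exact this
      apply Subtype.ext
      exact Prod.ext hj h5
    have hidxτ : ∀ j m : ℕ, τ (idx j m) = idx j (m + k) := by
      intro j m
      apply Subtype.ext
      refine Prod.ext rfl ?_
      show (m % p ^ (j + 1) + k) % p ^ (j + 1) = (m + k) % p ^ (j + 1)
      rw [Nat.mod_add_mod]
    have hsum_id : ∀ y m K, S (m + k + 1) y K - S (m + k) y K
        = S (m + 1) (y ∘ τ) K - S m (y ∘ τ) K := by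
      intro y m K
      show (∑ j ∈ Finset.range K, b ^ j * (y (idx j (m + k + 1)) - y (idx j 0)))
          - (∑ j ∈ Finset.range K, b ^ j * (y (idx j (m + k)) - y (idx j 0)))
        = (∑ j ∈ Finset.range K, b ^ j * ((y ∘ τ) (idx j (m + 1)) - (y ∘ τ) (idx j 0)))
          - (∑ j ∈ Finset.range K, b ^ j * ((y ∘ τ) (idx j m) - (y ∘ τ) (idx j 0)))
      rw [← Finset.sum_sub_distrib, ← Finset.sum_sub_distrib]
      refine Finset.sum_congr rfl fun j _ => ?_
      simp only [Function.comp_apply, hidxτ]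
      rw [show m + 1 + k = m + k + 1 by ring]
      ring
    have heq : ∀ᵐ y ∂ν, ∀ m, g (m + k + 1) y - g (m + k) y
        = g (m + 1) (y ∘ τ) - g m (y ∘ τ) := by
      filter_upwards [hgt', htransport τ hτ] with y h1 h2
      intro m
      have hA : Tendsto (fun K => S (m + k + 1) y K - S (m + k) y K) atTop
          (nhds (g (m + k + 1) y - g (m + k) y)) := (h1 _).sub (h1 _)
      have hB : Tendsto (fun K => S (m + 1) (y ∘ τ) K - S m (y ∘ τ) K) atTop
          (nhds (g (m + 1) (y ∘ τ) - g m (y ∘ τ))) := (h2 _).sub (h2 _)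
      have hfe : (fun K => S (m + k + 1) y K - S (m + k) y K)
          = fun K => S (m + 1) (y ∘ τ) K - S m (y ∘ τ) K := funext fun K => hsum_id y m K
      exact tendsto_nhds_unique (hfe ▸ hA) hB
    show Measure.map (fun ω m => g (m + 1) (Φ ω) - g m (Φ ω)) P
      = Measure.map (fun ω m => g (m + k + 1) (Φ ω) - g (m + k) (Φ ω)) P
    have hcomp : Measurable (fun y : {q : ℕ × ℕ // q.2 < p ^ (q.1 + 1)} → ℝ => y ∘ τ) :=
      measurable_pi_lambda _ fun i => measurable_pi_apply _
    have hFmeas : Measurable (fun y (m : ℕ) => g (m + k + 1) y - g (m + k) y) :=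
      measurable_pi_lambda _ fun m => (hgmeas _).sub (hgmeas _)
    have hF'meas : Measurable (fun y (m : ℕ) => g (m + 1) y - g m y) :=
      measurable_pi_lambda _ fun m => (hgmeas _).sub (hgmeas _)
    refine Eq.symm ?_
    calc Measure.map (fun ω m => g (m + k + 1) (Φ ω) - g (m + k) (Φ ω)) P
        = Measure.map (fun y (m : ℕ) => g (m + k + 1) y - g (m + k) y) ν :=
          (Measure.map_map hFmeas hΦ).symm
      _ = Measure.map (fun y (m : ℕ) => g (m + 1) (y ∘ τ) - g m (y ∘ τ)) ν :=
          Measure.map_congr (heq.mono fun y hy => funext hy)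
      _ = Measure.map ((fun y (m : ℕ) => g (m + 1) y - g m y) ∘ (fun y => y ∘ τ)) ν := rfl
      _ = Measure.map (fun y (m : ℕ) => g (m + 1) y - g m y)
            (Measure.map (fun y => y ∘ τ) ν) := (Measure.map_map hF'meas hcomp).symm
      _ = Measure.map (fun y (m : ℕ) => g (m + 1) y - g m y) ν := by rw [hmapσ τ hτ]
      _ = Measure.map (fun ω (m : ℕ) => g (m + 1) (Φ ω) - g m (Φ ω)) P :=
          Measure.map_map hF'meas hΦ
end
end
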